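/- arXiv:1903.07696 — 8 statements merged into one kernel-verified Lean document; each statement's English description precedes it below -/
import Mathlib

section
/- Let X ∈ ℝ^{m×ρ}, Ψ ∈ ℝ^{n×ρ} with orthonormal columns, and suppose X = Y Ψ where Y^T Y = A is invertible and X^T X is invertible. Then the minimizer r of ‖X r − (Y^T)^† b‖² satisfies r = Ψ^T u + (Ψ^T A Ψ)^{−1} Ψ^T A (I − Ψ Ψ^T) u, where u = A^{−1} b. -/
open Matrix Finset

private lemma mulVec_dot {m ρ : ℕ} (X : Matrix (Fin m) (Fin ρ) ℝ)
    (v : Fin ρ → ℝ) (z : Fin m → ℝ) : (X *ᵥ v) ⬝ᵥ z = v ⬝ᵥ (Xᵀ *ᵥ z) := by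
  calc (X *ᵥ v) ⬝ᵥ z = z ⬝ᵥ (X *ᵥ v) := dotProduct_comm _ _
    _ = (z ᵥ* X) ⬝ᵥ v := Matrix.dotProduct_mulVec _ _ _
    _ = (Xᵀ *ᵥ z) ⬝ᵥ v := by rw [Matrix.mulVec_transpose]
    _ = v ⬝ᵥ (Xᵀ *ᵥ z) := dotProduct_comm _ _

/-- the minimizer `r` of `‖X r − (Yᵀ)† b‖²` satisfies
`r = Ψᵀ u + (Ψᵀ A Ψ)⁻¹ Ψᵀ A (I − Ψ Ψᵀ) u` with `u = A⁻¹ b`, where `(Yᵀ)† = Y (Yᵀ Y)⁻¹`. -/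
theorem stmt1 {m n ρ : ℕ}
    (Y : Matrix (Fin m) (Fin n) ℝ)
    (Ψ : Matrix (Fin n) (Fin ρ) ℝ) (hΨ : Ψᵀ * Ψ = 1)
    (A : Matrix (Fin n) (Fin n) ℝ) (hA : A = Yᵀ * Y) (hAinv : IsUnit A.det)
    (X : Matrix (Fin m) (Fin ρ) ℝ) (hX : X = Y * Ψ)
    (hXinv : IsUnit (Xᵀ * X).det)
    (b u : Fin n → ℝ) (hu : u = A⁻¹ *ᵥ b)
    (r : Fin ρ → ℝ)
    (hr : ∀ s : Fin ρ → ℝ,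
      ∑ i, (X *ᵥ r - (Y * (Yᵀ * Y)⁻¹) *ᵥ b) i ^ 2 ≤
        ∑ i, (X *ᵥ s - (Y * (Yᵀ * Y)⁻¹) *ᵥ b) i ^ 2) :
    r = Ψᵀ *ᵥ u + ((Ψᵀ * A * Ψ)⁻¹ * (Ψᵀ * A * (1 - Ψ * Ψᵀ))) *ᵥ u := by
  have hBdef : Xᵀ * X = Ψᵀ * A * Ψ := by
    simp [hX, hA, Matrix.transpose_mul, Matrix.mul_assoc]
  set B := Xᵀ * X with hB
  have hBinv : IsUnit B.det := hXinv
  set c : Fin m → ℝ := (Y * (Yᵀ * Y)⁻¹) *ᵥ b with hc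
  set r₀ : Fin ρ → ℝ := B⁻¹ *ᵥ (Xᵀ *ᵥ c) with hr₀
  have hnorm : Xᵀ *ᵥ (X *ᵥ r₀ - c) = 0 := by
    rw [Matrix.mulVec_sub, hr₀, Matrix.mulVec_mulVec, Matrix.mulVec_mulVec,
      ← hB, Matrix.mul_nonsing_inv _ hBinv, Matrix.one_mulVec, sub_self]
  set d : Fin ρ → ℝ := r - r₀ with hd
  have hw : X *ᵥ r - c = (X *ᵥ r₀ - c) + X *ᵥ d := by
    rw [hd, Matrix.mulVec_sub]; abel
  have cross : (X *ᵥ d) ⬝ᵥ (X *ᵥ r₀ - c) = 0 := by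
    rw [mulVec_dot, hnorm, dotProduct_zero]
  have hexp : ∑ i, (X *ᵥ r - c) i ^ 2
      = ∑ i, (X *ᵥ r₀ - c) i ^ 2 + (X *ᵥ d) ⬝ᵥ (X *ᵥ d) := by
    have e1 : ∀ v : Fin m → ℝ, ∑ i, v i ^ 2 = v ⬝ᵥ v := by
      intro v; simp [dotProduct, sq]
    rw [e1, e1, hw, add_dotProduct, dotProduct_add, dotProduct_add,
      dotProduct_comm (X *ᵥ r₀ - c) (X *ᵥ d), cross]
    ring
  have hle := hr r₀
  have hd0 : (X *ᵥ d) ⬝ᵥ (X *ᵥ d) ≤ 0 := by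
    rw [hexp] at hle; linarith
  have hXd : X *ᵥ d = 0 := by
    have h0 : (X *ᵥ d) ⬝ᵥ (X *ᵥ d) = 0 :=
      le_antisymm hd0 (by
        simpa [dotProduct] using Finset.sum_nonneg
          (fun i _ => mul_self_nonneg ((X *ᵥ d) i)))
    funext i
    have := (Finset.sum_eq_zero_iff_of_nonneg
      (fun i _ => mul_self_nonneg ((X *ᵥ d) i))).mp (by simpa [dotProduct] using h0)
    have hi := this i (Finset.mem_univ i)
    have := mul_self_eq_zero.mp hi
    simpa using this
  have hrd : r = r₀ := by
    have hBd : B *ᵥ d = 0 := by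
      rw [hB, ← Matrix.mulVec_mulVec, hXd, Matrix.mulVec_zero]
    have hd0' : d = 0 := by
      have := congrArg (fun v => B⁻¹ *ᵥ v) hBd
      simpa [Matrix.mulVec_mulVec, Matrix.nonsing_inv_mul _ hBinv] using this
    have := sub_eq_zero.mp (by rw [← hd]; exact hd0')
    exact this
  have hbAu : b = A *ᵥ u := by
    rw [hu, Matrix.mulVec_mulVec, Matrix.mul_nonsing_inv _ hAinv, Matrix.one_mulVec]
  have h2 : Yᵀ * (Y * (Yᵀ * Y)⁻¹) = 1 := by
    rw [← Matrix.mul_assoc, ← hA, Matrix.mul_nonsing_inv _ hAinv]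
  have hXc : Xᵀ *ᵥ c = (Ψᵀ * A) *ᵥ u := by
    rw [hc, hX, Matrix.transpose_mul, Matrix.mulVec_mulVec, Matrix.mul_assoc,
      h2, Matrix.mul_one, hbAu, Matrix.mulVec_mulVec]
  have hMat : Ψᵀ + (Ψᵀ * A * Ψ)⁻¹ * (Ψᵀ * A * (1 - Ψ * Ψᵀ))
      = (Ψᵀ * A * Ψ)⁻¹ * (Ψᵀ * A) := by
    have hBinv' : IsUnit (Ψᵀ * A * Ψ).det := by rwa [← hBdef]
    have h1 : (Ψᵀ * A * Ψ)⁻¹ * (Ψᵀ * A * Ψ) = 1 := Matrix.nonsing_inv_mul _ hBinv'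
    have h3 : Ψᵀ * A * (1 - Ψ * Ψᵀ) = Ψᵀ * A - (Ψᵀ * A * Ψ) * Ψᵀ := by
      rw [Matrix.mul_sub, Matrix.mul_one, Matrix.mul_assoc (Ψᵀ * A)]
    rw [h3, Matrix.mul_sub, ← Matrix.mul_assoc _ (Ψᵀ * A * Ψ) Ψᵀ, h1, Matrix.one_mul]
    abel
  rw [hrd, hr₀, hXc, Matrix.mulVec_mulVec, hBdef, ← hMat, Matrix.add_mulVec]
end

section
/- With the same setup (X = Y Ψ, Y = Z^{1/2} D with D of full column rank, Z positive diagonal, A = Y^T Y invertible, X^T X invertible), the minimizer of ‖X r − Z^{−1/2}(D^T)^† b‖² equals the minimizer of ‖X r − (Y^T)^† b‖²; both equal (X^T X)^{−1} Ψ^T b. -/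
open Matrix Finset

lemma dot_aux {m n : ℕ} (A : Matrix (Fin m) (Fin n) ℝ) (a : Fin m → ℝ) (x : Fin n → ℝ) :
    a ⬝ᵥ (A *ᵥ x) = x ⬝ᵥ (Aᵀ *ᵥ a) := by
  rw [Matrix.mulVec_transpose, Matrix.dotProduct_mulVec,
    dotProduct_comm (a ᵥ* A) x]

/-- A minimizer of `‖X r − w‖²` with `XᵀX` invertible equals `(XᵀX)⁻¹ Xᵀ w`. -/
lemma min_unique {m ρ : ℕ} (X : Matrix (Fin m) (Fin ρ) ℝ)
    (hXinv : IsUnit (Xᵀ * X).det) (w : Fin m → ℝ) (r : Fin ρ → ℝ)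
    (hr : ∀ s : Fin ρ → ℝ, ∑ i, (X *ᵥ r - w) i ^ 2 ≤ ∑ i, (X *ᵥ s - w) i ^ 2) :
    r = (Xᵀ * X)⁻¹ *ᵥ (Xᵀ *ᵥ w) := by
  set r' : Fin ρ → ℝ := (Xᵀ * X)⁻¹ *ᵥ (Xᵀ *ᵥ w) with hr'
  have hXXr' : (Xᵀ * X) *ᵥ r' = Xᵀ *ᵥ w := by
    rw [hr', mulVec_mulVec, Matrix.mul_nonsing_inv _ hXinv, Matrix.one_mulVec]
  have h0 : Xᵀ *ᵥ (X *ᵥ r' - w) = 0 := by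
    rw [mulVec_sub, mulVec_mulVec, hXXr', sub_self]
  -- orthogonality decomposition
  have key : ∀ s : Fin ρ → ℝ, ∑ i, (X *ᵥ s - w) i ^ 2
      = ∑ i, (X *ᵥ (s - r')) i ^ 2 + ∑ i, (X *ᵥ r' - w) i ^ 2 := by
    intro s
    have hcross : (X *ᵥ (s - r')) ⬝ᵥ (X *ᵥ r' - w) = 0 := by
      rw [dotProduct_comm, Matrix.dotProduct_mulVec, ← Matrix.mulVec_transpose,
        h0, zero_dotProduct]
    have hsum : ∀ i, (X *ᵥ s - w) i = (X *ᵥ (s - r')) i + (X *ᵥ r' - w) i := by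
      intro i
      simp [mulVec_sub, _root_.sub_apply]
    calc ∑ i, (X *ᵥ s - w) i ^ 2
        = ∑ i, ((X *ᵥ (s - r')) i ^ 2 + 2 * ((X *ᵥ (s - r')) i * (X *ᵥ r' - w) i)
            + (X *ᵥ r' - w) i ^ 2) := by
          refine Finset.sum_congr rfl fun i _ => ?_
          rw [hsum i]; ring
      _ = ∑ i, (X *ᵥ (s - r')) i ^ 2 + 2 * ((X *ᵥ (s - r')) ⬝ᵥ (X *ᵥ r' - w))
            + ∑ i, (X *ᵥ r' - w) i ^ 2 := by
          rw [Finset.sum_add_distrib, Finset.sum_add_distrib, ← Finset.mul_sum]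
          rfl
      _ = _ := by rw [hcross]; ring
  have h1 := hr r'
  have h2 := key r
  have h3 : ∑ i, (X *ᵥ (r - r')) i ^ 2 ≤ 0 := by linarith
  have h4 : X *ᵥ (r - r') = 0 := by
    funext i
    have hnn : ∀ j ∈ Finset.univ, (0:ℝ) ≤ (X *ᵥ (r - r')) j ^ 2 := fun j _ => sq_nonneg _
    have := (Finset.sum_eq_zero_iff_of_nonneg hnn).mp
      (le_antisymm h3 (Finset.sum_nonneg hnn)) i (Finset.mem_univ i)
    exact (pow_eq_zero_iff two_ne_zero).mp this
  have h5 : (Xᵀ * X) *ᵥ (r - r') = 0 := by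
    rw [← mulVec_mulVec, h4, mulVec_zero]
  have h6 : r - r' = 0 := by
    have := congrArg (fun v => (Xᵀ * X)⁻¹ *ᵥ v) h5
    simpa [mulVec_mulVec, Matrix.nonsing_inv_mul _ hXinv] using this
  exact sub_eq_zero.mp h6

/-- the minimizer of `‖X r − Z^{−1/2}(Dᵀ)† b‖²` equals the minimizer of
`‖X r − (Yᵀ)† b‖²`; both equal `(Xᵀ X)⁻¹ Ψᵀ b`.  Here `(Dᵀ)† = D (Dᵀ D)⁻¹` and
`(Yᵀ)† = Y (Yᵀ Y)⁻¹`. -/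
theorem stmt2 {m n ρ : ℕ} (z : Fin m → ℝ) (hz : ∀ i, 0 < z i)
    (D : Matrix (Fin m) (Fin n) ℝ) (hD : D.rank = n)
    (Y : Matrix (Fin m) (Fin n) ℝ)
    (hY : Y = Matrix.diagonal (fun i => Real.sqrt (z i)) * D)
    (Ψ : Matrix (Fin n) (Fin ρ) ℝ) (hΨ : Ψᵀ * Ψ = 1)
    (hAinv : IsUnit (Yᵀ * Y).det)
    (X : Matrix (Fin m) (Fin ρ) ℝ) (hX : X = Y * Ψ)
    (hXinv : IsUnit (Xᵀ * X).det)
    (b : Fin n → ℝ)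
    (w₁ w₂ : Fin m → ℝ)
    (hw₁ : w₁ = (Matrix.diagonal (fun i => (Real.sqrt (z i))⁻¹) * (D * (Dᵀ * D)⁻¹)) *ᵥ b)
    (hw₂ : w₂ = (Y * (Yᵀ * Y)⁻¹) *ᵥ b)
    (r₁ r₂ : Fin ρ → ℝ)
    (hr₁ : ∀ s : Fin ρ → ℝ, ∑ i, (X *ᵥ r₁ - w₁) i ^ 2 ≤ ∑ i, (X *ᵥ s - w₁) i ^ 2)
    (hr₂ : ∀ s : Fin ρ → ℝ, ∑ i, (X *ᵥ r₂ - w₂) i ^ 2 ≤ ∑ i, (X *ᵥ s - w₂) i ^ 2) :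
    r₁ = r₂ ∧ r₁ = (Xᵀ * X)⁻¹ *ᵥ (Ψᵀ *ᵥ b) := by
  -- DᵀD is invertible since D has full column rank
  have hDinj : Function.Injective (D.mulVec) := by
    rw [← Matrix.coe_mulVecLin]
    rw [← LinearMap.ker_eq_bot]
    have hrk : Module.finrank ℝ (LinearMap.range D.mulVecLin) = n := hD
    have := D.mulVecLin.finrank_range_add_finrank_ker
    simp only [hrk, Module.finrank_pi, Fintype.card_fin] at this
    have hker0 : Module.finrank ℝ (LinearMap.ker D.mulVecLin) = 0 := by omega
    exact Submodule.finrank_eq_zero.mp hker0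
  have hDDinv : IsUnit (Dᵀ * D).det := by
    rw [← Matrix.isUnit_iff_isUnit_det, ← Matrix.mulVec_injective_iff_isUnit]
    intro u v huv
    apply hDinj
    have h1 : (D *ᵥ u - D *ᵥ v) ⬝ᵥ (D *ᵥ u - D *ᵥ v) = 0 := by
      have h2 : Dᵀ *ᵥ (D *ᵥ u - D *ᵥ v) = 0 := by
        rw [mulVec_sub, mulVec_mulVec, mulVec_mulVec]
        rw [show (Dᵀ * D) *ᵥ u = (Dᵀ * D) *ᵥ v from huv, sub_self]
      calc (D *ᵥ u - D *ᵥ v) ⬝ᵥ (D *ᵥ u - D *ᵥ v)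
          = (D *ᵥ (u - v)) ⬝ᵥ (D *ᵥ u - D *ᵥ v) := by rw [mulVec_sub]
        _ = (u - v) ⬝ᵥ (Dᵀ *ᵥ (D *ᵥ u - D *ᵥ v)) := by
            exact (dotProduct_comm _ _).trans (dot_aux D _ _)
        _ = 0 := by rw [h2, dotProduct_zero]
    have := (dotProduct_self_eq_zero (v := D *ᵥ u - D *ᵥ v)).mp h1
    exact sub_eq_zero.mp this
  -- Xᵀ w₁ = Ψᵀ b
  have hsqrt : ∀ i, Real.sqrt (z i) ≠ 0 := fun i => (Real.sqrt_pos.mpr (hz i)).ne'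
  have hXT : Xᵀ = Ψᵀ * (Dᵀ * Matrix.diagonal (fun i => Real.sqrt (z i))) := by
    rw [hX, hY, Matrix.transpose_mul, Matrix.transpose_mul, Matrix.diagonal_transpose]
  have hone : (fun i => Real.sqrt (z i) * (Real.sqrt (z i))⁻¹) = fun _ => (1:ℝ) := by
    funext i; exact mul_inv_cancel₀ (hsqrt i)
  have hM : (Ψᵀ * (Dᵀ * Matrix.diagonal (fun i => Real.sqrt (z i)))) *
      (Matrix.diagonal (fun i => (Real.sqrt (z i))⁻¹) * (D * (Dᵀ * D)⁻¹)) = Ψᵀ := by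
    simp only [Matrix.mul_assoc]
    rw [← Matrix.mul_assoc (Matrix.diagonal _) (Matrix.diagonal _),
      Matrix.diagonal_mul_diagonal, hone, Matrix.diagonal_one, Matrix.one_mul]
    rw [← Matrix.mul_assoc Dᵀ D, Matrix.mul_nonsing_inv _ hDDinv, Matrix.mul_one]
  have hXw₁ : Xᵀ *ᵥ w₁ = Ψᵀ *ᵥ b := by
    rw [hw₁, hXT, mulVec_mulVec, hM]
  have hXw₂ : Xᵀ *ᵥ w₂ = Ψᵀ *ᵥ b := by
    rw [hw₂, hX, Matrix.transpose_mul, mulVec_mulVec, Matrix.mul_assoc,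
      ← Matrix.mul_assoc Yᵀ, Matrix.mul_nonsing_inv _ hAinv, Matrix.mul_one]
  have e₁ := min_unique X hXinv w₁ r₁ hr₁
  have e₂ := min_unique X hXinv w₂ r₂ hr₂
  rw [hXw₁] at e₁
  rw [hXw₂] at e₂
  exact ⟨e₁.trans e₂.symm, e₁⟩
end

section
/- For the unbiased row-sampling estimator Ĝ of G = X^T X with c i.i.d. samples from ξ, the expected squared Frobenius error satisfies E[‖G − Ĝ‖_F²] = (1/c)( Σ_{ℓ=1}^m ξ_ℓ^{−1} ‖X_{(ℓ)}‖⁴ − ‖G‖_F² ). -/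
open Matrix Finset

private lemma pi_succ_sum {m c : ℕ} (G : (Fin (c+1) → Fin m) → ℝ) :
    ∑ r : Fin (c+1) → Fin m, G r = ∑ ℓ, ∑ r : Fin c → Fin m, G (Fin.cons ℓ r) := by
  rw [← (Fin.consEquiv (fun _ => Fin m)).sum_comp, Fintype.sum_prod_type]
  rfl

private lemma mom0 {m : ℕ} (ξ : Fin m → ℝ) (hξ1 : ∑ ℓ, ξ ℓ = 1) :
    ∀ c : ℕ, ∑ r : Fin c → Fin m, ∏ t, ξ (r t) = 1 := by
  intro c
  induction c with
  | zero => simp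
  | succ c ih =>
    rw [pi_succ_sum]
    simp only [Fin.prod_univ_succ, Fin.cons_zero, Fin.cons_succ, ← Finset.mul_sum, ih]
    simpa using hξ1

private lemma mom1 {m : ℕ} (ξ f : Fin m → ℝ) (hξ1 : ∑ ℓ, ξ ℓ = 1) :
    ∀ c : ℕ, ∑ r : Fin c → Fin m, (∏ t, ξ (r t)) * (∑ t, f (r t))
      = c * ∑ ℓ, ξ ℓ * f ℓ := by
  intro c
  induction c with
  | zero => simp
  | succ c ih =>
    rw [pi_succ_sum]
    simp only [Fin.prod_univ_succ, Fin.sum_univ_succ, Fin.cons_zero, Fin.cons_succ]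
    have : ∀ ℓ, ∑ r : Fin c → Fin m,
        ξ ℓ * (∏ t, ξ (r t)) * (f ℓ + ∑ t, f (r t))
        = ξ ℓ * f ℓ + ξ ℓ * ((c:ℝ) * ∑ ℓ, ξ ℓ * f ℓ) := by
      intro ℓ
      have e : ∀ r : Fin c → Fin m,
          ξ ℓ * (∏ t, ξ (r t)) * (f ℓ + ∑ t, f (r t))
          = (ξ ℓ * f ℓ) * (∏ t, ξ (r t)) + ξ ℓ * ((∏ t, ξ (r t)) * (∑ t, f (r t))) := by
        intro r; ring
      rw [Finset.sum_congr rfl (fun r _ => e r), Finset.sum_add_distrib,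
        ← Finset.mul_sum, ← Finset.mul_sum, mom0 ξ hξ1 c, ih, mul_one]
    rw [Finset.sum_congr rfl (fun ℓ _ => this ℓ), Finset.sum_add_distrib,
      ← Finset.sum_mul, hξ1]
    push_cast; ring

private lemma mom2 {m : ℕ} (ξ f : Fin m → ℝ) (hξ1 : ∑ ℓ, ξ ℓ = 1) :
    ∀ c : ℕ, ∑ r : Fin c → Fin m, (∏ t, ξ (r t)) * (∑ t, f (r t)) ^ 2
      = c * (∑ ℓ, ξ ℓ * f ℓ ^ 2) + (c * (c - 1)) * (∑ ℓ, ξ ℓ * f ℓ) ^ 2 := by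
  intro c
  induction c with
  | zero => simp
  | succ c ih =>
    rw [pi_succ_sum]
    simp only [Fin.prod_univ_succ, Fin.sum_univ_succ, Fin.cons_zero, Fin.cons_succ]
    have : ∀ ℓ, ∑ r : Fin c → Fin m,
        ξ ℓ * (∏ t, ξ (r t)) * (f ℓ + ∑ t, f (r t)) ^ 2
        = ξ ℓ * f ℓ ^ 2 + (2 * f ℓ) * (ξ ℓ * ((c:ℝ) * ∑ ℓ, ξ ℓ * f ℓ))
          + ξ ℓ * ((c:ℝ) * (∑ ℓ, ξ ℓ * f ℓ ^ 2) + ((c:ℝ) * ((c:ℝ) - 1)) * (∑ ℓ, ξ ℓ * f ℓ) ^ 2) := by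
      intro ℓ
      have e : ∀ r : Fin c → Fin m,
          ξ ℓ * (∏ t, ξ (r t)) * (f ℓ + ∑ t, f (r t)) ^ 2
          = (ξ ℓ * f ℓ ^ 2) * (∏ t, ξ (r t))
            + (2 * f ℓ * ξ ℓ) * ((∏ t, ξ (r t)) * (∑ t, f (r t)))
            + ξ ℓ * ((∏ t, ξ (r t)) * (∑ t, f (r t)) ^ 2) := by
        intro r; ring
      rw [Finset.sum_congr rfl (fun r _ => e r), Finset.sum_add_distrib,
        Finset.sum_add_distrib, ← Finset.mul_sum, ← Finset.mul_sum, ← Finset.mul_sum,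
        mom0 ξ hξ1 c, mom1 ξ f hξ1 c, ih, mul_one]
      ring
    rw [Finset.sum_congr rfl (fun ℓ _ => this ℓ), Finset.sum_add_distrib,
      Finset.sum_add_distrib,
      Finset.sum_congr rfl (fun ℓ (_ : ℓ ∈ univ) =>
        (by ring : 2 * f ℓ * (ξ ℓ * ((c:ℝ) * ∑ ℓ, ξ ℓ * f ℓ))
          = (ξ ℓ * f ℓ) * (2 * ((c:ℝ) * ∑ ℓ, ξ ℓ * f ℓ)))),
      ← Finset.sum_mul, ← Finset.sum_mul, hξ1]
    push_cast; ring

private lemma key {m : ℕ} (ξ f : Fin m → ℝ) (hξ1 : ∑ ℓ, ξ ℓ = 1) {c : ℕ} (hc : 0 < c) :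
    ∑ r : Fin c → Fin m, (∏ t, ξ (r t)) *
        ((∑ ℓ, ξ ℓ * f ℓ) - (c:ℝ)⁻¹ * ∑ t, f (r t)) ^ 2
      = (c:ℝ)⁻¹ * ((∑ ℓ, ξ ℓ * f ℓ ^ 2) - (∑ ℓ, ξ ℓ * f ℓ) ^ 2) := by
  have hc' : (c:ℝ) ≠ 0 := Nat.cast_ne_zero.mpr hc.ne'
  have e : ∀ r : Fin c → Fin m,
      (∏ t, ξ (r t)) * ((∑ ℓ, ξ ℓ * f ℓ) - (c:ℝ)⁻¹ * ∑ t, f (r t)) ^ 2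
      = (∑ ℓ, ξ ℓ * f ℓ) ^ 2 * (∏ t, ξ (r t))
        - (2 * (c:ℝ)⁻¹ * ∑ ℓ, ξ ℓ * f ℓ) * ((∏ t, ξ (r t)) * (∑ t, f (r t)))
        + ((c:ℝ)⁻¹ ^ 2) * ((∏ t, ξ (r t)) * (∑ t, f (r t)) ^ 2) := by
    intro r; ring
  rw [Finset.sum_congr rfl (fun r _ => e r), Finset.sum_add_distrib,
    Finset.sum_sub_distrib, ← Finset.mul_sum, ← Finset.mul_sum, ← Finset.mul_sum,
    mom0 ξ hξ1 c, mom1 ξ f hξ1 c, mom2 ξ f hξ1 c, mul_one]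
  field_simp
  ring


/-- the expected squared Frobenius error of the row-sampling estimator:
`E[‖G − Ĝ‖_F²] = (1/c)( Σ_ℓ ξ_ℓ⁻¹ ‖X_{(ℓ)}‖⁴ − ‖G‖_F² )` with `G = Xᵀ X`. -/
theorem stmt5 {m ρ c : ℕ} (hc : 0 < c)
    (X : Matrix (Fin m) (Fin ρ) ℝ)
    (ξ : Fin m → ℝ) (hξ0 : ∀ ℓ, 0 ≤ ξ ℓ) (hξ1 : ∑ ℓ, ξ ℓ = 1)
    (hξpos : ∀ ℓ, (∃ j, X ℓ j ≠ 0) → 0 < ξ ℓ) :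
    ∑ r : Fin c → Fin m, (∏ t, ξ (r t)) *
        (∑ i, ∑ j, ((Xᵀ * X) i j -
          ((c : ℝ)⁻¹ • ∑ t, (ξ (r t))⁻¹ • Matrix.vecMulVec (X (r t)) (X (r t))) i j) ^ 2)
      = (c : ℝ)⁻¹ *
        ((∑ ℓ, (ξ ℓ)⁻¹ * (∑ j, X ℓ j ^ 2) ^ 2) - ∑ i, ∑ j, (Xᵀ * X) i j ^ 2) := by
  -- zero rows have zero entries
  have hzero : ∀ ℓ, ξ ℓ = 0 → ∀ j, X ℓ j = 0 := by
    intro ℓ hℓ j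
    by_contra hj
    exact absurd hℓ (hξpos ℓ ⟨j, hj⟩).ne'
  -- entry simplification
  have hent : ∀ (r : Fin c → Fin m) (i j : Fin ρ),
      ((c : ℝ)⁻¹ • ∑ t, (ξ (r t))⁻¹ • Matrix.vecMulVec (X (r t)) (X (r t))) i j
      = (c:ℝ)⁻¹ * ∑ t, (fun ℓ => (ξ ℓ)⁻¹ * (X ℓ i * X ℓ j)) (r t) := by
    intro r i j
    simp [Matrix.smul_apply, Matrix.sum_apply, Matrix.vecMulVec_apply, smul_eq_mul, mul_assoc]
  have hG : ∀ i j : Fin ρ, (Xᵀ * X) i j = ∑ ℓ, X ℓ i * X ℓ j := by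
    intro i j; simp [Matrix.mul_apply, Matrix.transpose_apply]
  have hμ : ∀ i j : Fin ρ,
      ∑ ℓ, ξ ℓ * ((fun ℓ => (ξ ℓ)⁻¹ * (X ℓ i * X ℓ j)) ℓ) = (Xᵀ * X) i j := by
    intro i j
    rw [hG]
    refine Finset.sum_congr rfl fun ℓ _ => ?_
    by_cases h : ξ ℓ = 0
    · simp [h, hzero ℓ h i]
    · field_simp
  have hS : ∀ i j : Fin ρ,
      ∑ ℓ, ξ ℓ * ((fun ℓ => (ξ ℓ)⁻¹ * (X ℓ i * X ℓ j)) ℓ) ^ 2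
      = ∑ ℓ, (ξ ℓ)⁻¹ * (X ℓ i * X ℓ j) ^ 2 := by
    intro i j
    refine Finset.sum_congr rfl fun ℓ _ => ?_
    by_cases h : ξ ℓ = 0
    · simp [h]
    · field_simp
  -- per-entry expectation
  have hij : ∀ i j : Fin ρ,
      ∑ r : Fin c → Fin m, (∏ t, ξ (r t)) *
        ((Xᵀ * X) i j -
          ((c : ℝ)⁻¹ • ∑ t, (ξ (r t))⁻¹ • Matrix.vecMulVec (X (r t)) (X (r t))) i j) ^ 2
      = (c:ℝ)⁻¹ * ((∑ ℓ, (ξ ℓ)⁻¹ * (X ℓ i * X ℓ j) ^ 2) - ((Xᵀ * X) i j) ^ 2) := by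
    intro i j
    have := key ξ (fun ℓ => (ξ ℓ)⁻¹ * (X ℓ i * X ℓ j)) hξ1 hc
    rw [hμ i j, hS i j] at this
    rw [← this]
    exact Finset.sum_congr rfl fun r _ => by rw [hent r i j]
  -- swap the sums
  have hswap : ∑ r : Fin c → Fin m, (∏ t, ξ (r t)) *
        (∑ i, ∑ j, ((Xᵀ * X) i j -
          ((c : ℝ)⁻¹ • ∑ t, (ξ (r t))⁻¹ • Matrix.vecMulVec (X (r t)) (X (r t))) i j) ^ 2)
      = ∑ i, ∑ j, ∑ r : Fin c → Fin m, (∏ t, ξ (r t)) *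
        ((Xᵀ * X) i j -
          ((c : ℝ)⁻¹ • ∑ t, (ξ (r t))⁻¹ • Matrix.vecMulVec (X (r t)) (X (r t))) i j) ^ 2 := by
    simp only [Finset.mul_sum]
    rw [Finset.sum_comm]
    exact Finset.sum_congr rfl fun i _ => Finset.sum_comm
  rw [hswap, Finset.sum_congr rfl fun i _ => Finset.sum_congr rfl fun j _ => hij i j]
  -- final algebra
  simp only [← Finset.mul_sum]
  rw [mul_eq_mul_left_iff]
  left
  rw [Finset.sum_congr rfl (fun i (_ : i ∈ univ) => Finset.sum_sub_distrib _ _),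
    Finset.sum_sub_distrib]
  congr 1
  rw [Finset.sum_comm]
  rw [Finset.sum_congr rfl (fun j (_ : j ∈ univ) => Finset.sum_comm)]
  rw [Finset.sum_comm]
  refine Finset.sum_congr rfl fun ℓ _ => ?_
  rw [show ((∑ j, X ℓ j ^ 2) ^ 2) = ∑ j, ∑ i, X ℓ j ^ 2 * X ℓ i ^ 2 by
        rw [sq, Finset.sum_mul_sum],
      Finset.mul_sum]
  exact Finset.sum_congr rfl fun j _ => by
    rw [Finset.mul_sum]
    exact Finset.sum_congr rfl fun i _ => by ring
end

section
/- With the optimal sampling distribution ξ_ℓ = ‖X_{(ℓ)}‖²/‖X‖_F², the row-sampling estimator Ĝ of G = X^T X from c samples satisfies E[‖G − Ĝ‖_F²] ≤ (1/c)( (Σ_{ℓ=1}^m ‖X_{(ℓ)}‖²)² − ‖G‖_F² ). -/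
open Matrix Finset
lemma sum_pi_cons {ι : Type*} [Fintype ι] (c : ℕ) (g : (Fin (c+1) → ι) → ℝ) :
    ∑ r : Fin (c+1) → ι, g r = ∑ a : ι, ∑ r : Fin c → ι, g (Fin.cons a r) := by
  rw [← Fintype.sum_prod_type']
  exact Fintype.sum_equiv (Fin.consEquiv fun _ => ι).symm _ _ (fun r => by
    simp [Fin.consEquiv])

lemma L0 {ι : Type*} [Fintype ι] (ξ : ι → ℝ) (h1 : ∑ ℓ, ξ ℓ = 1) :
    ∀ c : ℕ, ∑ r : Fin c → ι, ∏ t, ξ (r t) = 1 := by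
  intro c
  induction c with
  | zero => simp
  | succ n ih =>
    rw [sum_pi_cons]
    simp only [Fin.prod_univ_succ, Fin.cons_zero, Fin.cons_succ]
    rw [← h1]
    exact Finset.sum_congr rfl fun a _ => by rw [← Finset.mul_sum, ih, mul_one]

lemma L1 {ι : Type*} [Fintype ι] (ξ f : ι → ℝ) (h1 : ∑ ℓ, ξ ℓ = 1) :
    ∀ c : ℕ, ∑ r : Fin c → ι, (∏ t, ξ (r t)) * (∑ t, f (r t))
      = c * ∑ ℓ, ξ ℓ * f ℓ := by
  intro c
  induction c with
  | zero => simp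
  | succ n ih =>
    rw [sum_pi_cons]
    have : ∀ a : ι, ∑ r : Fin n → ι,
        (∏ t, ξ ((Fin.cons a r : Fin (n+1) → ι) t)) * (∑ t, f ((Fin.cons a r : Fin (n+1) → ι) t))
        = ξ a * (f a + n * ∑ ℓ, ξ ℓ * f ℓ) := by
      intro a
      simp only [Fin.prod_univ_succ, Fin.sum_univ_succ, Fin.cons_zero, Fin.cons_succ]
      calc ∑ r : Fin n → ι, ξ a * (∏ t, ξ (r t)) * (f a + ∑ t, f (r t))
          = ξ a * ∑ r : Fin n → ι, ((∏ t, ξ (r t)) * f a + (∏ t, ξ (r t)) * (∑ t, f (r t))) := by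
            rw [Finset.mul_sum]; exact Finset.sum_congr rfl fun r _ => by ring
        _ = ξ a * (f a + n * ∑ ℓ, ξ ℓ * f ℓ) := by
            rw [Finset.sum_add_distrib, ← Finset.sum_mul, L0 ξ h1, ih, one_mul]
    rw [Finset.sum_congr rfl fun a _ => this a]
    have : ∑ a, ξ a * (f a + n * ∑ ℓ, ξ ℓ * f ℓ)
        = (∑ a, ξ a * f a) + (∑ a, ξ a) * (n * ∑ ℓ, ξ ℓ * f ℓ) := by
      rw [Finset.sum_mul, ← Finset.sum_add_distrib]
      exact Finset.sum_congr rfl fun a _ => by ring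
    rw [this, h1]; push_cast; ring

lemma L2 {ι : Type*} [Fintype ι] (ξ f : ι → ℝ) (h1 : ∑ ℓ, ξ ℓ = 1)
    (h2 : ∑ ℓ, ξ ℓ * f ℓ = 0) :
    ∀ c : ℕ, ∑ r : Fin c → ι, (∏ t, ξ (r t)) * (∑ t, f (r t)) ^ 2
      = c * ∑ ℓ, ξ ℓ * f ℓ ^ 2 := by
  intro c
  induction c with
  | zero => simp
  | succ n ih =>
    rw [sum_pi_cons]
    have key : ∀ a : ι, ∑ r : Fin n → ι,
        (∏ t, ξ ((Fin.cons a r : Fin (n+1) → ι) t)) * (∑ t, f ((Fin.cons a r : Fin (n+1) → ι) t)) ^ 2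
        = ξ a * (f a ^ 2 + n * ∑ ℓ, ξ ℓ * f ℓ ^ 2) := by
      intro a
      simp only [Fin.prod_univ_succ, Fin.sum_univ_succ, Fin.cons_zero, Fin.cons_succ]
      calc ∑ r : Fin n → ι, ξ a * (∏ t, ξ (r t)) * (f a + ∑ t, f (r t)) ^ 2
          = ξ a * ∑ r : Fin n → ι,
            ((∏ t, ξ (r t)) * f a ^ 2 + (2 * f a) * ((∏ t, ξ (r t)) * (∑ t, f (r t)))
              + (∏ t, ξ (r t)) * (∑ t, f (r t)) ^ 2) := by
            rw [Finset.mul_sum]; exact Finset.sum_congr rfl fun r _ => by ring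
        _ = ξ a * (f a ^ 2 + n * ∑ ℓ, ξ ℓ * f ℓ ^ 2) := by
            rw [Finset.sum_add_distrib, Finset.sum_add_distrib, ← Finset.sum_mul,
              ← Finset.mul_sum, L0 ξ h1, L1 ξ f h1, ih, h2, one_mul]
            ring_nf
    rw [Finset.sum_congr rfl fun a _ => key a]
    have : ∑ a, ξ a * (f a ^ 2 + n * ∑ ℓ, ξ ℓ * f ℓ ^ 2)
        = (∑ a, ξ a * f a ^ 2) + (∑ a, ξ a) * (n * ∑ ℓ, ξ ℓ * f ℓ ^ 2) := by
      rw [Finset.sum_mul, ← Finset.sum_add_distrib]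
      exact Finset.sum_congr rfl fun a _ => by ring
    rw [this, h1]; push_cast; ring


/-- with the optimal sampling distribution `ξ_ℓ = ‖X_{(ℓ)}‖²/‖X‖_F²`,
the row-sampling estimator from `c` samples satisfies
`E[‖G − Ĝ‖_F²] ≤ (1/c)( (Σ_ℓ ‖X_{(ℓ)}‖²)² − ‖G‖_F² )`. -/
theorem stmt7 {m ρ c : ℕ} (hc : 0 < c)
    (X : Matrix (Fin m) (Fin ρ) ℝ) (hX : X ≠ 0)
    (ξ : Fin m → ℝ)
    (hξ : ∀ ℓ, ξ ℓ = (∑ j, X ℓ j ^ 2) / (∑ ℓ', ∑ j, X ℓ' j ^ 2)) :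
    ∑ r : Fin c → Fin m, (∏ t, ξ (r t)) *
        (∑ i, ∑ j, ((Xᵀ * X) i j -
          ((c : ℝ)⁻¹ • ∑ t, (ξ (r t))⁻¹ • Matrix.vecMulVec (X (r t)) (X (r t))) i j) ^ 2)
      ≤ (c : ℝ)⁻¹ *
        ((∑ ℓ, ∑ j, X ℓ j ^ 2) ^ 2 - ∑ i, ∑ j, (Xᵀ * X) i j ^ 2) := by
  have hc' : (c : ℝ) ≠ 0 := Nat.cast_ne_zero.mpr hc.ne'
  set s : Fin m → ℝ := fun ℓ => ∑ j, X ℓ j ^ 2 with hsdef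
  have hF : (∑ ℓ, ∑ j, X ℓ j ^ 2) = ∑ ℓ, s ℓ := rfl
  set F : ℝ := ∑ ℓ, s ℓ with hFdef
  have hsnn : ∀ ℓ, 0 ≤ s ℓ := fun ℓ => Finset.sum_nonneg fun j _ => sq_nonneg _
  have hFpos : 0 < F := by
    obtain ⟨ℓ, j, hlj⟩ : ∃ ℓ j, X ℓ j ≠ 0 := by
      by_contra h; push_neg at h; exact hX (by ext ℓ j; simpa using h ℓ j)
    have h1 : 0 < s ℓ :=
      lt_of_lt_of_le (by positivity)
        (Finset.single_le_sum (fun j _ => sq_nonneg (X ℓ j)) (Finset.mem_univ j))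
    exact lt_of_lt_of_le h1 (Finset.single_le_sum (fun ℓ _ => hsnn ℓ) (Finset.mem_univ ℓ))
  have hξd : ∀ ℓ, ξ ℓ = s ℓ / F := hξ
  have hξ1 : ∑ ℓ, ξ ℓ = 1 := by
    simp only [hξd]; rw [← Finset.sum_div]; exact div_self hFpos.ne'
  have hzero : ∀ ℓ, s ℓ = 0 → ∀ i, X ℓ i = 0 := by
    intro ℓ h i
    have h2 := (Finset.sum_eq_zero_iff_of_nonneg
      (fun j _ => sq_nonneg (X ℓ j))).mp h i (Finset.mem_univ i)
    exact pow_eq_zero_iff (two_ne_zero) |>.mp h2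
  have hξne : ∀ ℓ, s ℓ ≠ 0 → ξ ℓ ≠ 0 := fun ℓ h => by
    rw [hξd]; exact div_ne_zero h hFpos.ne'
  set G : Fin ρ → Fin ρ → ℝ := fun i j => ∑ ℓ, X ℓ i * X ℓ j with hGdef
  have hG : ∀ i j, (Xᵀ * X) i j = G i j := by
    intro i j; simp [Matrix.mul_apply, Matrix.transpose_apply, hGdef]
  set f : Fin ρ → Fin ρ → Fin m → ℝ :=
    fun i j ℓ => G i j - (ξ ℓ)⁻¹ * (X ℓ i * X ℓ j) with hfdef
  -- first moment identity
  have hK1 : ∀ i j, ∑ ℓ, ξ ℓ * ((ξ ℓ)⁻¹ * (X ℓ i * X ℓ j)) = G i j := by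
    intro i j
    refine Finset.sum_congr rfl fun ℓ _ => ?_
    by_cases h : s ℓ = 0
    · simp [hzero ℓ h i]
    · rw [← mul_assoc, mul_inv_cancel₀ (hξne ℓ h), one_mul]
  have hmean : ∀ i j, ∑ ℓ, ξ ℓ * f i j ℓ = 0 := by
    intro i j
    simp only [hfdef, mul_sub]
    rw [Finset.sum_sub_distrib, ← Finset.sum_mul, hξ1, one_mul, hK1]
    ring
  -- second moment identity
  have hK2 : ∑ ℓ, ∑ i, ∑ j, ξ ℓ * ((ξ ℓ)⁻¹ * (X ℓ i * X ℓ j)) ^ 2 = F ^ 2 := by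
    have step : ∀ ℓ, ∑ i, ∑ j, ξ ℓ * ((ξ ℓ)⁻¹ * (X ℓ i * X ℓ j)) ^ 2 = F * s ℓ := by
      intro ℓ
      by_cases h : s ℓ = 0
      · simp [hzero ℓ h, h]
      · have e1 : ∑ i, ∑ j, ξ ℓ * ((ξ ℓ)⁻¹ * (X ℓ i * X ℓ j)) ^ 2
            = ξ ℓ * (ξ ℓ)⁻¹ ^ 2 * ((∑ i, X ℓ i ^ 2) * (∑ j, X ℓ j ^ 2)) := by
          rw [Finset.sum_mul_sum]
          rw [Finset.mul_sum]
          refine Finset.sum_congr rfl fun i _ => ?_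
          rw [Finset.mul_sum]
          exact Finset.sum_congr rfl fun j _ => by ring
        rw [e1, hξd]
        have hs' : (∑ i, X ℓ i ^ 2) = s ℓ := rfl
        rw [hs']
        field_simp
    rw [Finset.sum_congr rfl fun ℓ _ => step ℓ, ← Finset.mul_sum, ← hFdef, sq]
  -- the variance identity per entry
  have hvar : ∀ i j, ∑ ℓ, ξ ℓ * (f i j ℓ) ^ 2
      = (∑ ℓ, ξ ℓ * ((ξ ℓ)⁻¹ * (X ℓ i * X ℓ j)) ^ 2) - G i j ^ 2 := by
    intro i j
    have expand : ∀ ℓ, ξ ℓ * (f i j ℓ) ^ 2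
        = ξ ℓ * G i j ^ 2 - (2 * G i j) * (ξ ℓ * ((ξ ℓ)⁻¹ * (X ℓ i * X ℓ j)))
          + ξ ℓ * ((ξ ℓ)⁻¹ * (X ℓ i * X ℓ j)) ^ 2 := by
      intro ℓ; simp only [hfdef]; ring
    rw [Finset.sum_congr rfl fun ℓ _ => expand ℓ]
    rw [Finset.sum_add_distrib, Finset.sum_sub_distrib, ← Finset.sum_mul,
      ← Finset.mul_sum, hξ1, hK1]
    ring
  -- rewrite each entry of the estimator error
  have hentry : ∀ (r : Fin c → Fin m) (i : Fin ρ) (j : Fin ρ),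
      (Xᵀ * X) i j -
        ((c : ℝ)⁻¹ • ∑ t, (ξ (r t))⁻¹ • Matrix.vecMulVec (X (r t)) (X (r t))) i j
      = (c : ℝ)⁻¹ * ∑ t, f i j (r t) := by
    intro r i j
    have e1 : ((c : ℝ)⁻¹ • ∑ t, (ξ (r t))⁻¹ • Matrix.vecMulVec (X (r t)) (X (r t))) i j
        = (c : ℝ)⁻¹ * ∑ t, (ξ (r t))⁻¹ * (X (r t) i * X (r t) j) := by
      simp [Matrix.smul_apply, Matrix.sum_apply, Matrix.vecMulVec_apply, smul_eq_mul]
    have e2 : ∑ t, f i j (r t)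
        = (c : ℝ) * G i j - ∑ t, (ξ (r t))⁻¹ * (X (r t) i * X (r t) j) := by
      simp only [hfdef]
      rw [Finset.sum_sub_distrib, Finset.sum_const, Finset.card_univ, Fintype.card_fin,
        nsmul_eq_mul]
    rw [e1, hG, e2, mul_sub, ← mul_assoc, inv_mul_cancel₀ hc', one_mul]
  -- main computation
  have main : ∑ r : Fin c → Fin m, (∏ t, ξ (r t)) *
        (∑ i, ∑ j, ((Xᵀ * X) i j -
          ((c : ℝ)⁻¹ • ∑ t, (ξ (r t))⁻¹ • Matrix.vecMulVec (X (r t)) (X (r t))) i j) ^ 2)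
      = (c : ℝ)⁻¹ * (F ^ 2 - ∑ i, ∑ j, G i j ^ 2) := by
    calc ∑ r : Fin c → Fin m, (∏ t, ξ (r t)) *
          (∑ i, ∑ j, ((Xᵀ * X) i j -
            ((c : ℝ)⁻¹ • ∑ t, (ξ (r t))⁻¹ • Matrix.vecMulVec (X (r t)) (X (r t))) i j) ^ 2)
        = ∑ r : Fin c → Fin m, ∑ i, ∑ j,
            (c : ℝ)⁻¹ ^ 2 * ((∏ t, ξ (r t)) * (∑ t, f i j (r t)) ^ 2) := by
          refine Finset.sum_congr rfl fun r _ => ?_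
          rw [Finset.mul_sum]
          refine Finset.sum_congr rfl fun i _ => ?_
          rw [Finset.mul_sum]
          refine Finset.sum_congr rfl fun j _ => ?_
          rw [hentry r i j, mul_pow]
          ring
      _ = ∑ i, ∑ j, (c : ℝ)⁻¹ ^ 2 *
            ∑ r : Fin c → Fin m, (∏ t, ξ (r t)) * (∑ t, f i j (r t)) ^ 2 := by
          rw [Finset.sum_comm]
          refine Finset.sum_congr rfl fun i _ => ?_
          rw [Finset.sum_comm]
          refine Finset.sum_congr rfl fun j _ => ?_
          exact (Finset.mul_sum _ _ _).symm
      _ = ∑ i, ∑ j, (c : ℝ)⁻¹ * ∑ ℓ, ξ ℓ * (f i j ℓ) ^ 2 := by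
          refine Finset.sum_congr rfl fun i _ => Finset.sum_congr rfl fun j _ => ?_
          rw [L2 ξ (f i j) hξ1 (hmean i j) c, ← mul_assoc]
          congr 1
          rw [sq]
          field_simp
      _ = ∑ i, ∑ j, (c : ℝ)⁻¹ *
            ((∑ ℓ, ξ ℓ * ((ξ ℓ)⁻¹ * (X ℓ i * X ℓ j)) ^ 2) - G i j ^ 2) := by
          refine Finset.sum_congr rfl fun i _ => Finset.sum_congr rfl fun j _ => ?_
          rw [hvar]
      _ = (c : ℝ)⁻¹ * ∑ i, ∑ j,
            ((∑ ℓ, ξ ℓ * ((ξ ℓ)⁻¹ * (X ℓ i * X ℓ j)) ^ 2) - G i j ^ 2) := by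
          rw [Finset.mul_sum]
          refine Finset.sum_congr rfl fun i _ => (Finset.mul_sum _ _ _).symm
      _ = (c : ℝ)⁻¹ * (F ^ 2 - ∑ i, ∑ j, G i j ^ 2) := by
          congr 1
          have e1 : ∑ i, ∑ j,
              ((∑ ℓ, ξ ℓ * ((ξ ℓ)⁻¹ * (X ℓ i * X ℓ j)) ^ 2) - G i j ^ 2)
              = (∑ i, ∑ j, ∑ ℓ, ξ ℓ * ((ξ ℓ)⁻¹ * (X ℓ i * X ℓ j)) ^ 2)
                - ∑ i, ∑ j, G i j ^ 2 := by
            rw [← Finset.sum_sub_distrib]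
            exact Finset.sum_congr rfl fun i _ => Finset.sum_sub_distrib _ _
          have e2 : (∑ i, ∑ j, ∑ ℓ, ξ ℓ * ((ξ ℓ)⁻¹ * (X ℓ i * X ℓ j)) ^ 2) = F ^ 2 := by
            rw [← hK2]
            calc ∑ i, ∑ j, ∑ ℓ, ξ ℓ * ((ξ ℓ)⁻¹ * (X ℓ i * X ℓ j)) ^ 2
                = ∑ i, ∑ ℓ, ∑ j, ξ ℓ * ((ξ ℓ)⁻¹ * (X ℓ i * X ℓ j)) ^ 2 :=
                  Finset.sum_congr rfl fun i _ => Finset.sum_comm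
              _ = ∑ ℓ, ∑ i, ∑ j, ξ ℓ * ((ξ ℓ)⁻¹ * (X ℓ i * X ℓ j)) ^ 2 :=
                  Finset.sum_comm
          rw [e1, e2]
  rw [main]
  have hGG : (∑ i, ∑ j, (Xᵀ * X) i j ^ 2) = ∑ i, ∑ j, G i j ^ 2 := by
    refine Finset.sum_congr rfl fun i _ => Finset.sum_congr rfl fun j _ => by rw [hG]
  rw [hGG]
end

section
/- Let A ∈ ℝ^{n×n} be symmetric positive definite, Ψ ∈ ℝ^{n×ρ} with Ψ^T Ψ = I_ρ, Π = Ψ Ψ^T, G = Ψ^T A Ψ, u ∈ ℝ^n, and r = Ψ^T u + G^{−1} Ψ^T A (I − Π) u. Then ‖Π u − Ψ r‖ ≤ (λ_max(A)/λ_min(G)) ‖u − Π u‖. -/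
open Matrix Finset


lemma sqsum_eq_dot {m : ℕ} (v : Fin m → ℝ) : ∑ i, v i ^ 2 = v ⬝ᵥ v := by
  simp [dotProduct, sq]

lemma sqsum_mulVec_iso {m k : ℕ} (B : Matrix (Fin m) (Fin k) ℝ) (hB : Bᵀ * B = 1)
    (x : Fin k → ℝ) : ∑ i, (B *ᵥ x) i ^ 2 = ∑ i, x i ^ 2 := by
  rw [sqsum_eq_dot, sqsum_eq_dot, dotProduct_mulVec, ← mulVec_transpose, mulVec_mulVec, hB,
    one_mulVec]

lemma sqsum_diag {m : ℕ} (d x : Fin m → ℝ) :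
    ∑ i, (Matrix.diagonal d *ᵥ x) i ^ 2 = ∑ i, (d i)^2 * x i ^ 2 := by
  simp [mulVec_diagonal, mul_pow]

lemma herm_upper {m : ℕ} (M : Matrix (Fin m) (Fin m) ℝ) (hM : M.IsHermitian) (c : ℝ)
    (hc : ∀ i, |hM.eigenvalues i| ≤ c) (v : Fin m → ℝ) :
    ∑ i, (M *ᵥ v) i ^ 2 ≤ c ^ 2 * ∑ i, v i ^ 2 := by
  set U : Matrix (Fin m) (Fin m) ℝ := (hM.eigenvectorUnitary : Matrix (Fin m) (Fin m) ℝ)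
  have hU1 : Uᵀ * U = 1 := by
    have := (Unitary.coe_star_mul_self hM.eigenvectorUnitary)
    simpa [U, Matrix.star_eq_conjTranspose] using this
  have hU2 : U * Uᵀ = 1 := by
    have := (Unitary.coe_mul_star_self hM.eigenvectorUnitary)
    simpa [U, Matrix.star_eq_conjTranspose] using this
  have hspec : M = U * Matrix.diagonal hM.eigenvalues * Uᵀ := by
    have := hM.spectral_theorem
    simpa [U, Matrix.star_eq_conjTranspose, Function.comp] using this
  have key : M *ᵥ v = U *ᵥ (Matrix.diagonal hM.eigenvalues *ᵥ (Uᵀ *ᵥ v)) := by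
    conv_lhs => rw [hspec]
    simp [mulVec_mulVec, Matrix.mul_assoc]
  rw [key, sqsum_mulVec_iso U hU1, sqsum_diag]
  have hv : ∑ i, v i ^ 2 = ∑ i, (Uᵀ *ᵥ v) i ^ 2 := by
    rw [sqsum_mulVec_iso Uᵀ (by simpa using hU2)]
  rw [hv, Finset.mul_sum]
  apply Finset.sum_le_sum
  intro i _
  have h1 : (hM.eigenvalues i)^2 ≤ c^2 := by
    have := hc i
    nlinarith [abs_nonneg (hM.eigenvalues i), sq_abs (hM.eigenvalues i)]
  nlinarith [sq_nonneg ((Uᵀ *ᵥ v) i)]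

lemma herm_lower {m : ℕ} (M : Matrix (Fin m) (Fin m) ℝ) (hM : M.IsHermitian) (c : ℝ) (hc0 : 0 ≤ c)
    (hc : ∀ i, c ≤ |hM.eigenvalues i|) (v : Fin m → ℝ) :
    c ^ 2 * ∑ i, v i ^ 2 ≤ ∑ i, (M *ᵥ v) i ^ 2 := by
  set U : Matrix (Fin m) (Fin m) ℝ := (hM.eigenvectorUnitary : Matrix (Fin m) (Fin m) ℝ)
  have hU1 : Uᵀ * U = 1 := by
    have := (Unitary.coe_star_mul_self hM.eigenvectorUnitary)
    simpa [U, Matrix.star_eq_conjTranspose] using this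
  have hU2 : U * Uᵀ = 1 := by
    have := (Unitary.coe_mul_star_self hM.eigenvectorUnitary)
    simpa [U, Matrix.star_eq_conjTranspose] using this
  have hspec : M = U * Matrix.diagonal hM.eigenvalues * Uᵀ := by
    have := hM.spectral_theorem
    simpa [U, Matrix.star_eq_conjTranspose, Function.comp] using this
  have key : M *ᵥ v = U *ᵥ (Matrix.diagonal hM.eigenvalues *ᵥ (Uᵀ *ᵥ v)) := by
    conv_lhs => rw [hspec]
    simp [mulVec_mulVec, Matrix.mul_assoc]
  rw [key, sqsum_mulVec_iso U hU1, sqsum_diag]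
  have hv : ∑ i, v i ^ 2 = ∑ i, (Uᵀ *ᵥ v) i ^ 2 := by
    rw [sqsum_mulVec_iso Uᵀ (by simpa using hU2)]
  rw [hv, Finset.mul_sum]
  apply Finset.sum_le_sum
  intro i _
  have h1 : c^2 ≤ (hM.eigenvalues i)^2 := by
    have := hc i
    nlinarith [abs_nonneg (hM.eigenvalues i), sq_abs (hM.eigenvalues i)]
  nlinarith [sq_nonneg ((Uᵀ *ᵥ v) i)]

lemma proj_contract {m : ℕ} (P : Matrix (Fin m) (Fin m) ℝ) (hPs : Pᵀ = P) (hPi : P * P = P)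
    (x : Fin m → ℝ) : ∑ i, (P *ᵥ x) i ^ 2 ≤ ∑ i, x i ^ 2 := by
  set p := P *ᵥ x with hp
  have hdot : ∑ i, p i ^ 2 = ∑ i, p i * x i := by
    have h1 : ∑ i, p i ^ 2 = p ⬝ᵥ p := by simp [dotProduct, sq]
    have h2 : p ⬝ᵥ p = p ⬝ᵥ (P *ᵥ x) := by rw [← hp]
    have h3 : p ⬝ᵥ (P *ᵥ x) = (p ᵥ* P) ⬝ᵥ x := dotProduct_mulVec p P x
    have h4 : p ᵥ* P = p := by
      rw [← mulVec_transpose, hPs, hp, mulVec_mulVec, hPi]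
    rw [h1, h2, h3, h4]; rfl
  have hcs := Finset.sum_mul_sq_le_sq_mul_sq Finset.univ p x
  have hQp : (0:ℝ) ≤ ∑ i, p i ^ 2 := Finset.sum_nonneg fun i _ => sq_nonneg _
  have hQx : (0:ℝ) ≤ ∑ i, x i ^ 2 := Finset.sum_nonneg fun i _ => sq_nonneg _
  rcases hQp.eq_or_lt with h | h
  · linarith
  · nlinarith [hdot, hcs]


/-- with `A` symmetric positive definite, `Ψ` with orthonormal columns,
`Π = Ψ Ψᵀ`, `G = Ψᵀ A Ψ` and `r = Ψᵀ u + G⁻¹ Ψᵀ A (I − Π) u`, one has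
`‖Π u − Ψ r‖ ≤ (λ_max(A)/λ_min(G)) ‖u − Π u‖`. -/
theorem stmt11 {n ρ : ℕ} [NeZero n] [NeZero ρ]
    (A : Matrix (Fin n) (Fin n) ℝ) (hA : A.PosDef)
    (Ψ : Matrix (Fin n) (Fin ρ) ℝ) (hΨ : Ψᵀ * Ψ = 1)
    (G : Matrix (Fin ρ) (Fin ρ) ℝ) (hG : G = Ψᵀ * A * Ψ) (hGpd : G.PosDef)
    (u : Fin n → ℝ) (r : Fin ρ → ℝ)
    (hr : r = Ψᵀ *ᵥ u + (G⁻¹ * (Ψᵀ * A * (1 - Ψ * Ψᵀ))) *ᵥ u) :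
    Real.sqrt (∑ i, ((Ψ * Ψᵀ) *ᵥ u - Ψ *ᵥ r) i ^ 2) ≤
      (Finset.univ.sup' Finset.univ_nonempty hA.isHermitian.eigenvalues /
        Finset.univ.inf' Finset.univ_nonempty hGpd.isHermitian.eigenvalues) *
      Real.sqrt (∑ i, (u - (Ψ * Ψᵀ) *ᵥ u) i ^ 2) := by
  set lmax := Finset.univ.sup' Finset.univ_nonempty hA.isHermitian.eigenvalues with hlmax
  set lmin := Finset.univ.inf' Finset.univ_nonempty hGpd.isHermitian.eigenvalues with hlmin
  have hlmaxpos : 0 < lmax := by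
    obtain ⟨i⟩ := Fin.pos_iff_nonempty.mp (NeZero.pos n)
    exact lt_of_lt_of_le (hA.eigenvalues_pos i) (Finset.le_sup' _ (Finset.mem_univ i))
  have hlminpos : 0 < lmin := by
    rw [hlmin]
    exact (Finset.lt_inf'_iff _).mpr fun i _ => hGpd.eigenvalues_pos i
  set w := u - (Ψ * Ψᵀ) *ᵥ u with hw
  set x := A *ᵥ w with hx
  set y := Ψᵀ *ᵥ x with hy
  set z := G⁻¹ *ᵥ y with hz
  -- the vector identity
  have hmat : (G⁻¹ * (Ψᵀ * A * (1 - Ψ * Ψᵀ))) *ᵥ u = z := by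
    rw [hz, hy, hx, hw]
    simp [← mulVec_mulVec, Matrix.sub_mulVec, Matrix.one_mulVec]
  have hvec : (Ψ * Ψᵀ) *ᵥ u - Ψ *ᵥ r = Ψ *ᵥ (-z) := by
    rw [hr, Matrix.mulVec_add, hmat, ← mulVec_mulVec, Matrix.mulVec_neg]
    abel
  -- norms
  have hQz : ∑ i, ((Ψ * Ψᵀ) *ᵥ u - Ψ *ᵥ r) i ^ 2 = ∑ i, z i ^ 2 := by
    rw [hvec, sqsum_mulVec_iso Ψ hΨ]
    simp
  have hGz : G *ᵥ z = y := by
    rw [hz, mulVec_mulVec, Matrix.mul_nonsing_inv G hGpd.det_pos.ne'.isUnit, one_mulVec]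
  have hlow : lmin ^ 2 * ∑ i, z i ^ 2 ≤ ∑ i, y i ^ 2 := by
    have := herm_lower G hGpd.isHermitian lmin hlminpos.le
      (fun i => by
        rw [abs_of_pos (hGpd.eigenvalues_pos i)]
        exact Finset.inf'_le _ (Finset.mem_univ i)) z
    rwa [hGz] at this
  have hy_le : ∑ i, y i ^ 2 ≤ ∑ i, x i ^ 2 := by
    have h1 : ∑ i, y i ^ 2 = ∑ i, ((Ψ * Ψᵀ) *ᵥ x) i ^ 2 := by
      rw [← sqsum_mulVec_iso Ψ hΨ y, hy, mulVec_mulVec]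
    rw [h1]
    refine proj_contract _ ?_ ?_ x
    · simp [Matrix.transpose_mul]
    · rw [Matrix.mul_assoc, ← Matrix.mul_assoc Ψᵀ, hΨ, Matrix.one_mul]
  have hx_le : ∑ i, x i ^ 2 ≤ lmax ^ 2 * ∑ i, w i ^ 2 := by
    refine herm_upper A hA.isHermitian lmax
      (fun i => by
        rw [abs_of_pos (hA.eigenvalues_pos i)]
        exact Finset.le_sup' _ (Finset.mem_univ i)) w
  -- combine
  have hQznn : (0:ℝ) ≤ ∑ i, z i ^ 2 := Finset.sum_nonneg fun i _ => sq_nonneg _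
  have hQwnn : (0:ℝ) ≤ ∑ i, w i ^ 2 := Finset.sum_nonneg fun i _ => sq_nonneg _
  have hfinal : ∑ i, z i ^ 2 ≤ (lmax / lmin) ^ 2 * ∑ i, w i ^ 2 := by
    rw [div_pow, div_mul_eq_mul_div, le_div_iff₀ (by positivity)]
    nlinarith
  rw [hQz]
  calc Real.sqrt (∑ i, z i ^ 2) ≤ Real.sqrt ((lmax / lmin) ^ 2 * ∑ i, w i ^ 2) :=
        Real.sqrt_le_sqrt hfinal
    _ = (lmax / lmin) * Real.sqrt (∑ i, w i ^ 2) := by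
        rw [Real.sqrt_mul (sq_nonneg _), Real.sqrt_sq (by positivity)]
end

section
/- Let D ∈ ℝ^{m×n} with m ≥ n = rank(D) have SVD D = U Σ V^T with singular values λ_1 ≥ … ≥ λ_n > 0, let z > 0, Y = √z D, and let Ψ consist of the last ρ right singular vectors of D, X = Y Ψ. Define ξ^{l(X)}_ℓ = (U_{*(n−ρ+1:n)} U_{*(n−ρ+1:n)}^T)_{ℓℓ}/ρ and ξ^{r(X)}_ℓ = ‖X_{(ℓ)}‖²/‖X‖_F². Then ‖ξ^{r(X)} − ξ^{l(X)}‖_∞ ≤ max( λ_{n−ρ+1}²/Σ_{i=n−ρ+1}^n λ_i² − 1/ρ , 1/ρ − λ_n²/Σ_{i=n−ρ+1}^n λ_i² ). -/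
set_option maxHeartbeats 1000000


open Matrix Finset

/-- homogeneous model, max-norm bound: with `D = U Σ Vᵀ` an SVD of the
full-column-rank matrix `D`, `Ψ` the last `ρ` right singular vectors, `Y = √z D`,
`X = Y Ψ`, leverage-score probabilities `ξˡ` and row-norm probabilities `ξʳ`:
`‖ξʳ − ξˡ‖_∞ ≤ max( λ_{n−ρ+1}²/Σ − 1/ρ , 1/ρ − λ_n²/Σ )` where
`Σ = Σ_{i=n−ρ+1}^n λ_i²`. -/
theorem stmt16 {m n ρ : ℕ} (hρ : 0 < ρ) (hρn : ρ ≤ n) (hnm : n ≤ m)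
    (U : Matrix (Fin m) (Fin n) ℝ) (hU : Uᵀ * U = 1)
    (V : Matrix (Fin n) (Fin n) ℝ) (hV : Vᵀ * V = 1)
    (lam : Fin n → ℝ) (hlama : Antitone lam) (hlampos : ∀ i, 0 < lam i)
    (D : Matrix (Fin m) (Fin n) ℝ) (hD : D = U * Matrix.diagonal lam * Vᵀ)
    (z : ℝ) (hz : 0 < z)
    (emb : Fin ρ → Fin n) (hemb : ∀ j, (emb j : ℕ) = n - ρ + (j : ℕ))
    (Ψ : Matrix (Fin n) (Fin ρ) ℝ) (hΨ : ∀ i j, Ψ i j = V i (emb j))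
    (X : Matrix (Fin m) (Fin ρ) ℝ) (hX : X = Real.sqrt z • (D * Ψ))
    (ξl ξr : Fin m → ℝ)
    (hξl : ∀ ℓ, ξl ℓ = (∑ j, (U ℓ (emb j)) ^ 2) / ρ)
    (hξr : ∀ ℓ, ξr ℓ = (∑ j, X ℓ j ^ 2) / (∑ ℓ', ∑ j, X ℓ' j ^ 2)) :
    ∀ ℓ, |ξr ℓ - ξl ℓ| ≤
      max ((lam ⟨n - ρ, by omega⟩) ^ 2 / (∑ j, (lam (emb j)) ^ 2) - 1 / ρ)
          (1 / ρ - (lam ⟨n - 1, by omega⟩) ^ 2 / (∑ j, (lam (emb j)) ^ 2)) := by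
  intro ℓ
  have hzρ : (0:ℝ) < ρ := by exact_mod_cast hρ
  have hne : Nonempty (Fin ρ) := ⟨⟨0, hρ⟩⟩
  set S := ∑ j, (lam (emb j))^2 with hSdef
  have hSpos : 0 < S :=
    Finset.sum_pos (fun j _ => pow_pos (hlampos _) 2) Finset.univ_nonempty
  set j0 : Fin ρ := ⟨0, hρ⟩ with hj0def
  set j1 : Fin ρ := ⟨ρ - 1, by omega⟩ with hj1def
  have hj0v : ((emb j0 : Fin n) : ℕ) = n - ρ := by
    rw [hemb]; simp [hj0def]
  have hj1v : ((emb j1 : Fin n) : ℕ) = n - 1 := by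
    rw [hemb]; simp [hj1def]; omega
  have hmax : ∀ j, lam (emb j) ≤ lam (emb j0) := by
    intro j
    apply hlama
    rw [Fin.le_def, hemb, hemb]
    have h0 : (j0:ℕ) = 0 := rfl
    omega
  have hmin : ∀ j, lam (emb j1) ≤ lam (emb j) := by
    intro j
    apply hlama
    rw [Fin.le_def, hemb, hemb]
    have h1 : (j1:ℕ) = ρ - 1 := rfl
    have := j.2
    omega
  -- entries of X
  have hDV : D * V = U * Matrix.diagonal lam := by
    rw [hD, Matrix.mul_assoc, hV, Matrix.mul_one]
  have hXe : ∀ i j, X i j = Real.sqrt z * (U i (emb j) * lam (emb j)) := by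
    intro i j
    have h1 : (D * Ψ) i j = (D * V) i (emb j) := by
      simp only [Matrix.mul_apply, hΨ]
    rw [hX]
    simp only [Matrix.smul_apply, smul_eq_mul]
    rw [h1, hDV, Matrix.mul_diagonal]
  have hX2 : ∀ i j, X i j ^ 2 = z * ((U i (emb j))^2 * (lam (emb j))^2) := by
    intro i j
    rw [hXe, mul_pow, mul_pow, Real.sq_sqrt hz.le]
  -- column normalization
  have hcol : ∀ i, ∑ l', (U l' i)^2 = 1 := by
    intro i
    have h := congrFun (congrFun hU i) i
    simpa [Matrix.mul_apply, Matrix.transpose_apply, Matrix.one_apply, sq] using h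
  -- total sum
  have hT : ∑ ℓ', ∑ j, X ℓ' j ^ 2 = z * S := by
    rw [Finset.sum_comm, hSdef, Finset.mul_sum]
    refine Finset.sum_congr rfl fun j _ => ?_
    calc ∑ ℓ', X ℓ' j ^ 2 = ∑ ℓ', z * ((U ℓ' (emb j))^2 * (lam (emb j))^2) :=
          Finset.sum_congr rfl fun ℓ' _ => hX2 ℓ' j
      _ = z * (lam (emb j))^2 * ∑ ℓ', (U ℓ' (emb j))^2 := by
          rw [Finset.mul_sum]; exact Finset.sum_congr rfl fun x _ => by ring
      _ = z * (lam (emb j))^2 := by rw [hcol, mul_one]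
  -- row sum bound
  have hinj : Function.Injective emb := by
    intro a b hab
    have ha := hemb a
    have hb := hemb b
    apply Fin.ext
    have : (emb a : ℕ) = (emb b : ℕ) := by rw [hab]
    omega
  have hsym : ∀ a b, (U * Uᵀ) a b = (U * Uᵀ) b a := by
    intro a b
    simp only [Matrix.mul_apply, Matrix.transpose_apply]
    exact Finset.sum_congr rfl fun k _ => mul_comm _ _
  have hM : (U * Uᵀ) * (U * Uᵀ) = U * Uᵀ := by
    rw [Matrix.mul_assoc, ← Matrix.mul_assoc Uᵀ, hU, Matrix.one_mul]
  have hp : ∑ i, (U ℓ i)^2 = (U * Uᵀ) ℓ ℓ := by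
    simp [Matrix.mul_apply, Matrix.transpose_apply, sq]
  have hpnn : 0 ≤ (U * Uᵀ) ℓ ℓ := hp ▸ Finset.sum_nonneg fun i _ => sq_nonneg _
  have h3 : (U * Uᵀ) ℓ ℓ = ∑ k, ((U * Uᵀ) ℓ k)^2 := by
    conv_lhs => rw [← hM, Matrix.mul_apply]
    exact Finset.sum_congr rfl fun k _ => by rw [sq, hsym k ℓ]
  have h2 : ((U * Uᵀ) ℓ ℓ)^2 ≤ ∑ k, ((U * Uᵀ) ℓ k)^2 :=
    Finset.single_le_sum (f := fun k => ((U * Uᵀ) ℓ k)^2)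
      (fun k _ => sq_nonneg _) (Finset.mem_univ ℓ)
  have hple : (U * Uᵀ) ℓ ℓ ≤ 1 := by nlinarith [h2, h3.symm]
  have hrow : ∑ j, (U ℓ (emb j))^2 ≤ 1 := by
    have h1 : ∑ j, (U ℓ (emb j))^2 = ∑ i ∈ Finset.univ.image emb, (U ℓ i)^2 := by
      rw [Finset.sum_image (fun a _ b _ h => hinj h)]
    have h2' : ∑ i ∈ Finset.univ.image emb, (U ℓ i)^2 ≤ ∑ i, (U ℓ i)^2 :=
      Finset.sum_le_sum_of_subset_of_nonneg (Finset.subset_univ _)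
        (fun i _ _ => sq_nonneg _)
    rw [h1]
    calc ∑ i ∈ Finset.univ.image emb, (U ℓ i)^2 ≤ ∑ i, (U ℓ i)^2 := h2'
      _ = (U * Uᵀ) ℓ ℓ := hp
      _ ≤ 1 := hple
  -- difference formula
  have hξr' : ξr ℓ = ∑ j, (U ℓ (emb j))^2 * ((lam (emb j))^2 / S) := by
    rw [hξr, hT]
    rw [show (∑ j, X ℓ j^2) = z * ∑ j, (U ℓ (emb j))^2 * (lam (emb j))^2 from by
      rw [Finset.mul_sum]; exact Finset.sum_congr rfl fun j _ => hX2 ℓ j]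
    rw [mul_div_mul_left _ _ (ne_of_gt hz), Finset.sum_div]
    exact Finset.sum_congr rfl fun j _ => mul_div_assoc _ _ _
  have hdiff : ξr ℓ - ξl ℓ = ∑ j, (U ℓ (emb j))^2 * ((lam (emb j))^2 / S - 1/ρ) := by
    rw [hξr', hξl ℓ, Finset.sum_div, ← Finset.sum_sub_distrib]
    exact Finset.sum_congr rfl fun j _ => by ring
  set A := ∑ j, (U ℓ (emb j))^2 with hAdef
  have hAnn : 0 ≤ A := Finset.sum_nonneg fun j _ => sq_nonneg _
  set B1 := (lam (emb j0))^2 / S - 1/ρ with hB1def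
  set B2 := 1/ρ - (lam (emb j1))^2 / S with hB2def
  have hB1nn : 0 ≤ B1 := by
    have hSle : S ≤ ρ * (lam (emb j0))^2 := by
      calc S ≤ ∑ _j : Fin ρ, (lam (emb j0))^2 :=
            Finset.sum_le_sum fun j _ =>
              pow_le_pow_left₀ (hlampos _).le (hmax j) 2
        _ = ρ * (lam (emb j0))^2 := by
            rw [Finset.sum_const, Finset.card_univ, Fintype.card_fin, nsmul_eq_mul]
    rw [hB1def, sub_nonneg, div_le_div_iff₀ hzρ hSpos, one_mul]
    linarith
  have hB2nn : 0 ≤ B2 := by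
    have hSge : ρ * (lam (emb j1))^2 ≤ S := by
      calc (ρ:ℝ) * (lam (emb j1))^2 = ∑ _j : Fin ρ, (lam (emb j1))^2 := by
            rw [Finset.sum_const, Finset.card_univ, Fintype.card_fin, nsmul_eq_mul]
        _ ≤ S := Finset.sum_le_sum fun j _ =>
            pow_le_pow_left₀ (hlampos _).le (hmin j) 2
    rw [hB2def, sub_nonneg, div_le_div_iff₀ hSpos hzρ, one_mul]
    linarith
  have hub : ξr ℓ - ξl ℓ ≤ B1 := by
    rw [hdiff]
    calc ∑ j, (U ℓ (emb j))^2 * ((lam (emb j))^2 / S - 1/ρ)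
        ≤ ∑ j, (U ℓ (emb j))^2 * B1 := by
          refine Finset.sum_le_sum fun j _ => mul_le_mul_of_nonneg_left ?_ (sq_nonneg _)
          rw [hB1def]
          have h : (lam (emb j))^2 ≤ (lam (emb j0))^2 :=
            pow_le_pow_left₀ (hlampos _).le (hmax j) 2
          have := (div_le_div_iff_of_pos_right hSpos).mpr h
          linarith
      _ = A * B1 := by rw [← Finset.sum_mul]
      _ ≤ 1 * B1 := mul_le_mul_of_nonneg_right hrow hB1nn
      _ = B1 := one_mul _
  have hlb : -B2 ≤ ξr ℓ - ξl ℓ := by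
    rw [hdiff]
    calc -B2 ≤ A * (-B2) := by nlinarith [hrow]
      _ = ∑ j, (U ℓ (emb j))^2 * (-B2) := by rw [Finset.sum_mul]
      _ ≤ ∑ j, (U ℓ (emb j))^2 * ((lam (emb j))^2 / S - 1/ρ) := by
          refine Finset.sum_le_sum fun j _ => mul_le_mul_of_nonneg_left ?_ (sq_nonneg _)
          rw [hB2def]
          have h : (lam (emb j1))^2 ≤ (lam (emb j))^2 :=
            pow_le_pow_left₀ (hlampos _).le (hmin j) 2
          have := (div_le_div_iff_of_pos_right hSpos).mpr h
          linarith
  have hfin : |ξr ℓ - ξl ℓ| ≤ max B1 B2 := by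
    rw [abs_le]
    constructor
    · have := le_max_right B1 B2; linarith
    · have := le_max_left B1 B2; linarith
  have e0 : lam ⟨n - ρ, by omega⟩ = lam (emb j0) := by
    congr 1; apply Fin.ext; simp only [Fin.val_mk]; omega
  have e1 : lam ⟨n - 1, by omega⟩ = lam (emb j1) := by
    congr 1; apply Fin.ext; simp only [Fin.val_mk]; omega
  rw [e0, e1]
  rw [hB1def, hB2def] at hfin
  exact hfin
end

section
/- Under the same homogeneous-model setup, the Euclidean distance satisfies ‖ξ^{r(X)} − ξ^{l(X)}‖₂ ≤ sqrt( Σ_{i=n−ρ+1}^n ( λ_i²/Σ_{j=n−ρ+1}^n λ_j² − 1/ρ )² ). -/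
open Matrix Finset

/-- homogeneous model, Euclidean bound: same setup as Statement 16;
`‖ξʳ − ξˡ‖₂ ≤ sqrt( Σ_{i=n−ρ+1}^n ( λ_i²/Σ_{j=n−ρ+1}^n λ_j² − 1/ρ )² )`. -/
theorem stmt17 {m n ρ : ℕ} (hρ : 0 < ρ) (hρn : ρ ≤ n) (hnm : n ≤ m)
    (U : Matrix (Fin m) (Fin n) ℝ) (hU : Uᵀ * U = 1)
    (V : Matrix (Fin n) (Fin n) ℝ) (hV : Vᵀ * V = 1)
    (lam : Fin n → ℝ) (hlama : Antitone lam) (hlampos : ∀ i, 0 < lam i)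
    (D : Matrix (Fin m) (Fin n) ℝ) (hD : D = U * Matrix.diagonal lam * Vᵀ)
    (z : ℝ) (hz : 0 < z)
    (emb : Fin ρ → Fin n) (hemb : ∀ j, (emb j : ℕ) = n - ρ + (j : ℕ))
    (Ψ : Matrix (Fin n) (Fin ρ) ℝ) (hΨ : ∀ i j, Ψ i j = V i (emb j))
    (X : Matrix (Fin m) (Fin ρ) ℝ) (hX : X = Real.sqrt z • (D * Ψ))
    (ξl ξr : Fin m → ℝ)
    (hξl : ∀ ℓ, ξl ℓ = (∑ j, (U ℓ (emb j)) ^ 2) / ρ)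
    (hξr : ∀ ℓ, ξr ℓ = (∑ j, X ℓ j ^ 2) / (∑ ℓ', ∑ j, X ℓ' j ^ 2)) :
    Real.sqrt (∑ ℓ, (ξr ℓ - ξl ℓ) ^ 2) ≤
      Real.sqrt (∑ i : Fin ρ,
        ((lam (emb i)) ^ 2 / (∑ j, (lam (emb j)) ^ 2) - 1 / ρ) ^ 2) := by
  have hembinj : Function.Injective emb := by
    intro a b hab
    have := congrArg (Fin.val) hab
    rw [hemb a, hemb b] at this
    exact Fin.ext (by omega)
  -- entries of X
  have hXentry : ∀ ℓ j, X ℓ j = Real.sqrt z * (lam (emb j) * U ℓ (emb j)) := by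
    intro ℓ j
    have hVV : ∀ i k, (Vᵀ * V) i k = if i = k then (1:ℝ) else 0 := by
      intro i k; rw [hV]; simp [Matrix.one_apply]
    rw [hX]
    simp only [Matrix.smul_apply, smul_eq_mul]
    congr 1
    rw [hD]
    have h1 : (U * Matrix.diagonal lam * Vᵀ * Ψ) ℓ j
        = ∑ k, (∑ i, (U * Matrix.diagonal lam) ℓ i * V k i) * V k (emb j) := by
      simp only [Matrix.mul_apply, Matrix.transpose_apply, hΨ]
    simp only [Matrix.mul_diagonal] at h1
    rw [h1]
    have h2 : ∑ k, (∑ i, U ℓ i * lam i * V k i) * V k (emb j)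
        = ∑ i, U ℓ i * lam i * ∑ k, V k i * V k (emb j) := by
      simp only [Finset.sum_mul]
      rw [Finset.sum_comm]
      refine Finset.sum_congr rfl fun i _ => ?_
      rw [Finset.mul_sum]
      exact Finset.sum_congr rfl fun k _ => by ring
    rw [h2]
    have h3 : ∀ i : Fin n, (∑ k, V k i * V k (emb j)) = if i = emb j then (1:ℝ) else 0 := by
      intro i
      have := hVV i (emb j)
      simpa [Matrix.mul_apply, Matrix.transpose_apply] using this
    simp only [h3, mul_ite, mul_one, mul_zero]
    rw [Finset.sum_ite_eq' Finset.univ (emb j) (fun i => U ℓ i * lam i)]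
    simp [mul_comm]
  -- column norms of U (restricted to emb-columns) are 1
  have hcol : ∀ j : Fin ρ, (∑ ℓ, U ℓ (emb j) ^ 2) = 1 := by
    intro j
    have h := congrFun (congrFun hU (emb j)) (emb j)
    simp only [Matrix.mul_apply, Matrix.transpose_apply, Matrix.one_apply_eq] at h
    rw [← h]
    exact Finset.sum_congr rfl fun ℓ _ => sq (U ℓ (emb j))
  -- row sums of squares bounded by 1
  have hrow : ∀ ℓ, (∑ j : Fin ρ, U ℓ (emb j) ^ 2) ≤ 1 := by
    intro ℓ
    have hsub : (∑ j : Fin ρ, U ℓ (emb j) ^ 2) ≤ ∑ i : Fin n, U ℓ i ^ 2 := by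
      have himg : (∑ i ∈ Finset.univ.image emb, U ℓ i ^ 2)
          = ∑ j : Fin ρ, U ℓ (emb j) ^ 2 :=
        Finset.sum_image (fun a _ b _ hab => hembinj hab)
      rw [← himg]
      exact Finset.sum_le_sum_of_subset_of_nonneg (Finset.subset_univ _)
        (fun i _ _ => sq_nonneg _)
    refine hsub.trans ?_
    -- P := U * Uᵀ is a projection; its diagonal entries are ≤ 1
    set P : Matrix (Fin m) (Fin m) ℝ := U * Uᵀ with hP
    have hPP : P * P = P := by
      rw [hP, Matrix.mul_assoc, ← Matrix.mul_assoc Uᵀ U Uᵀ, hU, Matrix.one_mul]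
    have hPsymm : ∀ a b, P a b = P b a := by
      intro a b
      simp only [hP, Matrix.mul_apply, Matrix.transpose_apply]
      exact Finset.sum_congr rfl fun k _ => by ring
    have hdiag : (∑ i : Fin n, U ℓ i ^ 2) = P ℓ ℓ := by
      simp only [hP, Matrix.mul_apply, Matrix.transpose_apply]
      exact Finset.sum_congr rfl fun i _ => (sq (U ℓ i))
    rw [hdiag]
    have hr0 : 0 ≤ P ℓ ℓ := by
      rw [← hdiag]; positivity
    have hrr : P ℓ ℓ = ∑ k, P ℓ k ^ 2 := by
      have := congrFun (congrFun hPP ℓ) ℓ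
      rw [Matrix.mul_apply] at this
      rw [← this]
      exact (Finset.sum_congr rfl fun k _ => by rw [hPsymm k ℓ]; ring).symm
    have hsq : P ℓ ℓ ^ 2 ≤ P ℓ ℓ := by
      have h1 : P ℓ ℓ ^ 2 ≤ ∑ k, P ℓ k ^ 2 :=
        Finset.single_le_sum (f := fun k => P ℓ k ^ 2)
          (fun k _ => sq_nonneg _) (Finset.mem_univ ℓ)
      exact h1.trans_eq hrr.symm
    nlinarith [hsq, hr0]
  -- abbreviations
  set S : ℝ := ∑ j : Fin ρ, lam (emb j) ^ 2 with hS
  have hSpos : 0 < S := by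
    rw [hS]
    exact Finset.sum_pos (fun j _ => pow_pos (hlampos _) 2) ⟨⟨0, hρ⟩, Finset.mem_univ _⟩
  -- total sum of squares of X
  have htot : (∑ ℓ', ∑ j, X ℓ' j ^ 2) = z * S := by
    rw [Finset.sum_comm]
    have : ∀ j : Fin ρ, (∑ ℓ', X ℓ' j ^ 2) = z * lam (emb j) ^ 2 := by
      intro j
      have : ∀ ℓ', X ℓ' j ^ 2 = z * lam (emb j) ^ 2 * U ℓ' (emb j) ^ 2 := by
        intro ℓ'
        rw [hXentry ℓ' j, mul_pow, mul_pow, Real.sq_sqrt hz.le]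
        ring
      simp only [this]
      rw [← Finset.mul_sum, hcol j, mul_one]
    simp only [this]
    rw [← Finset.mul_sum, hS]
  -- value of ξr
  have hξr' : ∀ ℓ, ξr ℓ = ∑ j : Fin ρ, (lam (emb j) ^ 2 / S) * U ℓ (emb j) ^ 2 := by
    intro ℓ
    rw [hξr ℓ, htot]
    have hnum : (∑ j, X ℓ j ^ 2) = z * ∑ j : Fin ρ, lam (emb j) ^ 2 * U ℓ (emb j) ^ 2 := by
      rw [Finset.mul_sum]
      refine Finset.sum_congr rfl fun j _ => ?_
      rw [hXentry ℓ j, mul_pow, mul_pow, Real.sq_sqrt hz.le]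
    rw [hnum, mul_div_mul_left _ _ hz.ne', Finset.sum_div]
    exact Finset.sum_congr rfl fun j _ => by ring
  -- difference
  have hdiff : ∀ ℓ, ξr ℓ - ξl ℓ
      = ∑ j : Fin ρ, (lam (emb j) ^ 2 / S - 1 / ρ) * U ℓ (emb j) ^ 2 := by
    intro ℓ
    rw [hξr' ℓ, hξl ℓ, Finset.sum_div, ← Finset.sum_sub_distrib]
    exact Finset.sum_congr rfl fun j _ => by ring
  -- main inequality
  apply Real.sqrt_le_sqrt
  have key : ∀ ℓ, (ξr ℓ - ξl ℓ) ^ 2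
      ≤ ∑ j : Fin ρ, (lam (emb j) ^ 2 / S - 1 / ρ) ^ 2 * U ℓ (emb j) ^ 2 := by
    intro ℓ
    rw [hdiff ℓ]
    set c : Fin ρ → ℝ := fun j => lam (emb j) ^ 2 / S - 1 / ρ with hc
    set w : Fin ρ → ℝ := fun j => U ℓ (emb j) ^ 2 with hw
    have hw0 : ∀ j, 0 ≤ w j := fun j => sq_nonneg _
    have cs : (∑ j, c j * w j) ^ 2 ≤ (∑ j, w j) * ∑ j, c j ^ 2 * w j := by
      have h := Finset.sum_mul_sq_le_sq_mul_sq Finset.univ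
        (fun j => Real.sqrt (w j)) (fun j => c j * Real.sqrt (w j))
      have e1 : ∀ j : Fin ρ, Real.sqrt (w j) * (c j * Real.sqrt (w j)) = c j * w j := by
        intro j
        rw [show Real.sqrt (w j) * (c j * Real.sqrt (w j))
            = c j * (Real.sqrt (w j) * Real.sqrt (w j)) by ring,
          Real.mul_self_sqrt (hw0 j)]
      have e2 : ∀ j : Fin ρ, Real.sqrt (w j) ^ 2 = w j := fun j => Real.sq_sqrt (hw0 j)
      have e3 : ∀ j : Fin ρ, (c j * Real.sqrt (w j)) ^ 2 = c j ^ 2 * w j := by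
        intro j; rw [mul_pow, Real.sq_sqrt (hw0 j)]
      simpa only [e1, e2, e3] using h
    refine cs.trans ?_
    have hWle : (∑ j, w j) ≤ 1 := hrow ℓ
    have hnn : 0 ≤ ∑ j, c j ^ 2 * w j :=
      Finset.sum_nonneg fun j _ => mul_nonneg (sq_nonneg _) (hw0 j)
    calc (∑ j, w j) * ∑ j, c j ^ 2 * w j ≤ 1 * ∑ j, c j ^ 2 * w j :=
          mul_le_mul_of_nonneg_right hWle hnn
      _ = ∑ j, c j ^ 2 * w j := one_mul _
  calc (∑ ℓ, (ξr ℓ - ξl ℓ) ^ 2)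
      ≤ ∑ ℓ, ∑ j : Fin ρ, (lam (emb j) ^ 2 / S - 1 / ρ) ^ 2 * U ℓ (emb j) ^ 2 :=
        Finset.sum_le_sum fun ℓ _ => key ℓ
    _ = ∑ j : Fin ρ, (lam (emb j) ^ 2 / S - 1 / ρ) ^ 2 * ∑ ℓ, U ℓ (emb j) ^ 2 := by
        rw [Finset.sum_comm]
        exact Finset.sum_congr rfl fun j _ => (Finset.mul_sum _ _ _).symm
    _ = ∑ j : Fin ρ, (lam (emb j) ^ 2 / S - 1 / ρ) ^ 2 := by
        refine Finset.sum_congr rfl fun j _ => ?_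
        rw [hcol j, mul_one]
end

section
/- Let X ∈ ℝ^{m×ρ} have rank ρ with SVD X = U_X Σ_X V_X^T, and set π_i = λ_i(Σ_X²)/‖X‖_F² for i = 1,…,ρ. Let ξ^{l(X)}_ℓ = (U_X U_X^T)_{ℓℓ}/ρ and ξ^{r(X)}_ℓ = ‖X_{(ℓ)}‖²/‖X‖_F². Then ‖ξ^{r(X)} − ξ^{l(X)}‖₂ ≤ sqrt( Σ_{i=1}^ρ π_i² − 1/ρ ) and ‖ξ^{r(X)} − ξ^{l(X)}‖_∞ ≤ max( max_i π_i − 1/ρ , 1/ρ − min_i π_i ). -/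
open Matrix Finset

/-- inhomogeneous model: for `X` of rank `ρ` with SVD `X = U Σ Vᵀ`,
`π_i = λ_i(Σ²)/‖X‖_F²`, leverage-score probabilities `ξˡ` and row-norm probabilities
`ξʳ`: `‖ξʳ − ξˡ‖₂ ≤ sqrt(Σ_i π_i² − 1/ρ)` and
`‖ξʳ − ξˡ‖_∞ ≤ max( max_i π_i − 1/ρ , 1/ρ − min_i π_i )`. -/
theorem stmt18 {m ρ : ℕ} [NeZero ρ] (hρm : ρ ≤ m)
    (X : Matrix (Fin m) (Fin ρ) ℝ)
    (U : Matrix (Fin m) (Fin ρ) ℝ) (hU : Uᵀ * U = 1)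
    (V : Matrix (Fin ρ) (Fin ρ) ℝ) (hV : Vᵀ * V = 1)
    (s : Fin ρ → ℝ) (hs : ∀ i, 0 < s i)
    (hX : X = U * Matrix.diagonal s * Vᵀ)
    (π : Fin ρ → ℝ) (hπ : ∀ i, π i = s i ^ 2 / (∑ ℓ, ∑ j, X ℓ j ^ 2))
    (ξl ξr : Fin m → ℝ)
    (hξl : ∀ ℓ, ξl ℓ = (∑ j, U ℓ j ^ 2) / ρ)
    (hξr : ∀ ℓ, ξr ℓ = (∑ j, X ℓ j ^ 2) / (∑ ℓ', ∑ j, X ℓ' j ^ 2)) :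
    Real.sqrt (∑ ℓ, (ξr ℓ - ξl ℓ) ^ 2) ≤ Real.sqrt ((∑ i, π i ^ 2) - 1 / ρ) ∧
    ∀ ℓ, |ξr ℓ - ξl ℓ| ≤
      max (Finset.univ.sup' Finset.univ_nonempty π - 1 / ρ)
          (1 / ρ - Finset.univ.inf' Finset.univ_nonempty π) := by
  have hρ : (ρ : ℝ) ≠ 0 := Nat.cast_ne_zero.mpr (NeZero.ne ρ)
  have hρpos : (0:ℝ) < ρ := by positivity
  -- general diagonal sandwich entries
  have hdiag : ∀ (t : Fin ρ → ℝ) (ℓ k : Fin m),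
      (U * Matrix.diagonal t * Uᵀ) ℓ k = ∑ i, t i * (U ℓ i * U k i) := by
    intro t ℓ k
    rw [Matrix.mul_apply]
    refine Finset.sum_congr rfl fun i _ => ?_
    rw [Matrix.mul_diagonal, Matrix.transpose_apply]; ring
  have hXX : X * Xᵀ = U * Matrix.diagonal (fun i => s i ^ 2) * Uᵀ := by
    rw [hX]
    have h1 : (U * Matrix.diagonal s * Vᵀ)ᵀ = V * (Matrix.diagonal s * Uᵀ) := by
      simp [Matrix.transpose_mul, Matrix.diagonal_transpose, Matrix.mul_assoc]
    rw [h1]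
    have hDD : Matrix.diagonal s * Matrix.diagonal s
        = Matrix.diagonal (fun i => s i ^ 2) := by
      rw [Matrix.diagonal_mul_diagonal]
      ext i j
      simp [Matrix.diagonal_apply, pow_two]
    calc U * Matrix.diagonal s * Vᵀ * (V * (Matrix.diagonal s * Uᵀ))
        = U * Matrix.diagonal s * ((Vᵀ * V) * (Matrix.diagonal s * Uᵀ)) := by
          simp [Matrix.mul_assoc]
      _ = U * (Matrix.diagonal s * (Matrix.diagonal s * Uᵀ)) := by
          rw [hV, Matrix.one_mul, Matrix.mul_assoc]
      _ = U * Matrix.diagonal (fun i => s i ^ 2) * Uᵀ := by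
          rw [← Matrix.mul_assoc (Matrix.diagonal s), hDD, ← Matrix.mul_assoc]
  have hrow : ∀ ℓ, (∑ j, X ℓ j ^ 2) = ∑ i, s i ^ 2 * (U ℓ i * U ℓ i) := by
    intro ℓ
    have h2 : (∑ j, X ℓ j ^ 2) = (X * Xᵀ) ℓ ℓ := by
      rw [Matrix.mul_apply]
      exact Finset.sum_congr rfl fun j _ => by rw [Matrix.transpose_apply]; ring
    rw [h2, hXX, hdiag]
  have hUorth : ∀ i i', (∑ ℓ, U ℓ i * U ℓ i') = if i = i' then (1:ℝ) else 0 := by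
    intro i i'
    have h3 := congrFun (congrFun hU i) i'
    rw [Matrix.mul_apply, Matrix.one_apply] at h3
    simp only [Matrix.transpose_apply] at h3
    exact h3
  have hFs : (∑ ℓ, ∑ j, X ℓ j ^ 2) = ∑ i, s i ^ 2 := by
    calc (∑ ℓ, ∑ j, X ℓ j ^ 2) = ∑ ℓ, ∑ i, s i ^ 2 * (U ℓ i * U ℓ i) :=
          Finset.sum_congr rfl fun ℓ _ => hrow ℓ
      _ = ∑ i, s i ^ 2 * (∑ ℓ, U ℓ i * U ℓ i) := by
          rw [Finset.sum_comm]
          exact Finset.sum_congr rfl fun i _ => (Finset.mul_sum _ _ _).symm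
      _ = ∑ i, s i ^ 2 := by
          refine Finset.sum_congr rfl fun i _ => ?_
          rw [hUorth i i, if_pos rfl, mul_one]
  have hFpos : (0:ℝ) < ∑ ℓ, ∑ j, X ℓ j ^ 2 := by
    rw [hFs]
    exact Finset.sum_pos (fun i _ => pow_pos (hs i) 2) Finset.univ_nonempty
  have hF : (∑ ℓ, ∑ j, X ℓ j ^ 2) ≠ 0 := ne_of_gt hFpos
  have hπsum : ∑ i, π i = 1 := by
    simp only [hπ]
    rw [← Finset.sum_div, ← hFs, div_self hF]
  -- difference formula
  have hdiff : ∀ ℓ, ξr ℓ - ξl ℓ = ∑ i, (π i - 1/(ρ:ℝ)) * (U ℓ i * U ℓ i) := by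
    intro ℓ
    rw [hξr, hξl, hrow]
    rw [Finset.sum_div, Finset.sum_div, ← Finset.sum_sub_distrib]
    refine Finset.sum_congr rfl fun i _ => ?_
    rw [hπ i]
    have : U ℓ i ^ 2 = U ℓ i * U ℓ i := sq (U ℓ i) ▸ rfl
    field_simp
  -- leverage scores bounds
  have hlevnn : ∀ ℓ, (0:ℝ) ≤ ∑ i, U ℓ i * U ℓ i :=
    fun ℓ => Finset.sum_nonneg fun i _ => mul_self_nonneg _
  have hP : (U * Uᵀ) * (U * Uᵀ) = U * Uᵀ := by
    calc (U * Uᵀ) * (U * Uᵀ) = U * ((Uᵀ * U) * Uᵀ) := by simp [Matrix.mul_assoc]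
      _ = U * Uᵀ := by rw [hU, Matrix.one_mul]
  have hPsymm : ∀ ℓ k, (U * Uᵀ) k ℓ = (U * Uᵀ) ℓ k := by
    intro ℓ k
    rw [Matrix.mul_apply, Matrix.mul_apply]
    exact Finset.sum_congr rfl fun i _ => by
      rw [Matrix.transpose_apply, Matrix.transpose_apply]; ring
  have hdP : ∀ ℓ, (U * Uᵀ) ℓ ℓ = ∑ i, U ℓ i * U ℓ i := by
    intro ℓ
    rw [Matrix.mul_apply]
    exact Finset.sum_congr rfl fun i _ => by rw [Matrix.transpose_apply]
  have hlev : ∀ ℓ, (∑ i, U ℓ i * U ℓ i) ≤ 1 := by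
    intro ℓ
    have h4 := congrFun (congrFun hP ℓ) ℓ
    rw [Matrix.mul_apply] at h4
    have h5 : (∑ k, ((U * Uᵀ) ℓ k)^2) = ∑ i, U ℓ i * U ℓ i := by
      rw [← hdP, ← h4]
      exact Finset.sum_congr rfl fun k _ => by rw [sq, hPsymm ℓ k]
    have h6 : ((U * Uᵀ) ℓ ℓ)^2 ≤ ∑ k, ((U * Uᵀ) ℓ k)^2 :=
      Finset.single_le_sum (f := fun k => ((U * Uᵀ) ℓ k)^2)
        (fun k _ => sq_nonneg _) (Finset.mem_univ ℓ)
    rw [h5, hdP] at h6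
    nlinarith [hlevnn ℓ]
  -- max/min of π around 1/ρ
  set M := Finset.univ.sup' Finset.univ_nonempty π with hM
  set mπ := Finset.univ.inf' Finset.univ_nonempty π with hm
  have hle : ∀ i, π i ≤ M := fun i => Finset.le_sup' π (Finset.mem_univ i)
  have hge : ∀ i, mπ ≤ π i := fun i => Finset.inf'_le π (Finset.mem_univ i)
  have hMge : 1/(ρ:ℝ) ≤ M := by
    have h7 : (∑ i, π i) ≤ (Finset.univ.card : ℕ) • M :=
      Finset.sum_le_card_nsmul _ _ _ (fun i _ => hle i)
    rw [hπsum, Finset.card_univ, Fintype.card_fin, nsmul_eq_mul] at h7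
    rw [div_le_iff₀ hρpos]
    linarith
  have hmle : mπ ≤ 1/(ρ:ℝ) := by
    have h8 : (Finset.univ.card : ℕ) • mπ ≤ ∑ i, π i :=
      Finset.card_nsmul_le_sum _ _ _ (fun i _ => hge i)
    rw [hπsum, Finset.card_univ, Fintype.card_fin, nsmul_eq_mul] at h8
    rw [le_div_iff₀ hρpos]
    linarith
  constructor
  · -- L2 bound
    apply Real.sqrt_le_sqrt
    set c : Fin ρ → ℝ := fun i => π i - 1/(ρ:ℝ) with hc
    have hCC : (U * Matrix.diagonal c * Uᵀ) * (U * Matrix.diagonal c * Uᵀ)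
        = U * Matrix.diagonal (fun i => c i ^ 2) * Uᵀ := by
      have hDD : Matrix.diagonal c * Matrix.diagonal c
          = Matrix.diagonal (fun i => c i ^ 2) := by
        rw [Matrix.diagonal_mul_diagonal]
        ext i j
        simp [Matrix.diagonal_apply, pow_two]
      calc (U * Matrix.diagonal c * Uᵀ) * (U * Matrix.diagonal c * Uᵀ)
          = U * Matrix.diagonal c * ((Uᵀ * U) * (Matrix.diagonal c * Uᵀ)) := by
            simp [Matrix.mul_assoc]
        _ = U * (Matrix.diagonal c * (Matrix.diagonal c * Uᵀ)) := by
            rw [hU, Matrix.one_mul, Matrix.mul_assoc]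
        _ = _ := by
            rw [← Matrix.mul_assoc (Matrix.diagonal c), hDD, ← Matrix.mul_assoc]
    have htr : (∑ ℓ, ∑ k, ((U * Matrix.diagonal c * Uᵀ) ℓ k)^2) = ∑ i, c i ^ 2 := by
      have h9 : (∑ ℓ, ∑ k, ((U * Matrix.diagonal c * Uᵀ) ℓ k)^2)
          = Matrix.trace ((U * Matrix.diagonal c * Uᵀ) * (U * Matrix.diagonal c * Uᵀ)) := by
        rw [Matrix.trace]
        refine Finset.sum_congr rfl fun ℓ _ => ?_
        rw [Matrix.diag_apply, Matrix.mul_apply]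
        refine Finset.sum_congr rfl fun k _ => ?_
        rw [sq]
        congr 1
        rw [hdiag, hdiag]
        exact Finset.sum_congr rfl fun i _ => by ring
      rw [h9, hCC, Matrix.mul_assoc, Matrix.trace_mul_comm, Matrix.mul_assoc, hU,
        Matrix.mul_one, Matrix.trace_diagonal]
    calc ∑ ℓ, (ξr ℓ - ξl ℓ)^2
        ≤ ∑ ℓ, ∑ k, ((U * Matrix.diagonal c * Uᵀ) ℓ k)^2 := by
          refine Finset.sum_le_sum fun ℓ _ => ?_
          have h10 : (ξr ℓ - ξl ℓ)^2 = ((U * Matrix.diagonal c * Uᵀ) ℓ ℓ)^2 := by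
            rw [hdiff ℓ, hdiag]
          rw [h10]
          exact Finset.single_le_sum (f := fun k => ((U * Matrix.diagonal c * Uᵀ) ℓ k)^2)
            (fun k _ => sq_nonneg _) (Finset.mem_univ ℓ)
      _ = ∑ i, c i ^ 2 := htr
      _ = (∑ i, π i ^ 2) - 1/(ρ:ℝ) := by
          have h11 : ∀ i ∈ Finset.univ, c i ^ 2
              = π i ^ 2 - 2 * (1/(ρ:ℝ)) * π i + (1/(ρ:ℝ))^2 := fun i _ => by
            simp only [hc]; ring
          rw [Finset.sum_congr rfl h11]
          rw [Finset.sum_add_distrib, Finset.sum_sub_distrib, ← Finset.mul_sum, hπsum,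
            Finset.sum_const, Finset.card_univ, Fintype.card_fin, nsmul_eq_mul]
          field_simp
          ring
  · -- Linf bound
    intro ℓ
    have hub : ξr ℓ - ξl ℓ ≤ M - 1/(ρ:ℝ) := by
      rw [hdiff ℓ]
      calc ∑ i, (π i - 1/(ρ:ℝ)) * (U ℓ i * U ℓ i)
          ≤ ∑ i, (M - 1/(ρ:ℝ)) * (U ℓ i * U ℓ i) :=
            Finset.sum_le_sum fun i _ =>
              mul_le_mul_of_nonneg_right (by linarith [hle i]) (mul_self_nonneg _)
        _ = (M - 1/(ρ:ℝ)) * (∑ i, U ℓ i * U ℓ i) := (Finset.mul_sum _ _ _).symm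
        _ ≤ (M - 1/(ρ:ℝ)) * 1 :=
            mul_le_mul_of_nonneg_left (hlev ℓ) (by linarith)
        _ = M - 1/(ρ:ℝ) := mul_one _
    have hlb : -(1/(ρ:ℝ) - mπ) ≤ ξr ℓ - ξl ℓ := by
      rw [hdiff ℓ]
      calc -(1/(ρ:ℝ) - mπ) = (mπ - 1/(ρ:ℝ)) * 1 := by ring
        _ ≤ (mπ - 1/(ρ:ℝ)) * (∑ i, U ℓ i * U ℓ i) :=
            mul_le_mul_of_nonpos_left (hlev ℓ) (by linarith)
        _ = ∑ i, (mπ - 1/(ρ:ℝ)) * (U ℓ i * U ℓ i) := Finset.mul_sum _ _ _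
        _ ≤ ∑ i, (π i - 1/(ρ:ℝ)) * (U ℓ i * U ℓ i) :=
            Finset.sum_le_sum fun i _ =>
              mul_le_mul_of_nonneg_right (by linarith [hge i]) (mul_self_nonneg _)
    rw [abs_le]
    constructor
    · have := le_max_right (M - 1/(ρ:ℝ)) (1/(ρ:ℝ) - mπ)
      linarith
    · have := le_max_left (M - 1/(ρ:ℝ)) (1/(ρ:ℝ) - mπ)
      linarith
end
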